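/- arXiv:2112.01248 — 3 statements merged into one kernel-verified Lean document; each statement's English description precedes it below -/
import Mathlib

section
/- Let a > 0. If a sequence Λ ⊂ ℝ is sampling for the Gaussian shift-invariant space V²_a, then Λ is a finite union of separated subsequences, and Λ contains a separated subsequence Λ̃ with lower Beurling density D⁻(Λ̃) ≥ 1. -/
open Filter MeasureTheory

/-- `gaussShiftSum c coef x = ∑_{n∈ℤ} coef n · e^{-c(x-n)²}`, the generic element of the
Gaussian shift-invariant space `V²_c`. -/
noncomputable def gaussShiftSum (c : ℂ) (coef : ℤ → ℂ) (x : ℝ) : ℂ :=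
  ∑' n : ℤ, coef n * Complex.exp (-c * ((x : ℂ) - (n : ℂ)) ^ 2)

/-- A set `Λ ⊆ ℝ` is separated if distinct points are at distance at least some `ε > 0`. -/
def IsSeparatedSet (Λ : Set ℝ) : Prop :=
  ∃ ε > 0, ∀ x ∈ Λ, ∀ y ∈ Λ, x ≠ y → ε ≤ |x - y|

/-- `Λ` is a sampling sequence for `V²_c`:
`A‖f‖² ≤ ∑_{λ∈Λ} |f(λ)|² ≤ B‖f‖²`, where `‖f‖²_{V²} = ∑ |c_n|²`. -/
def IsSamplingV2 (c : ℂ) (Λ : Set ℝ) : Prop :=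
  ∃ A > 0, ∃ B > 0, ∀ coef : ℤ → ℂ, Summable (fun n => ‖coef n‖ ^ 2) →
    A * (∑' n : ℤ, ‖coef n‖ ^ 2) ≤ (∑' lam : Λ, ‖gaussShiftSum c coef (lam : ℝ)‖ ^ 2) ∧
    (∑' lam : Λ, ‖gaussShiftSum c coef (lam : ℝ)‖ ^ 2) ≤ B * (∑' n : ℤ, ‖coef n‖ ^ 2)

/-- `Λ` is an interpolating sequence for `V²_c`: every `ℓ²` data on `Λ` is interpolated by
some `f ∈ V²_c`. -/
def IsInterpolatingV2 (c : ℂ) (Λ : Set ℝ) : Prop :=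
  ∀ a : Λ → ℂ, Summable (fun lam => ‖a lam‖ ^ 2) →
    ∃ coef : ℤ → ℂ, Summable (fun n => ‖coef n‖ ^ 2) ∧
      ∀ lam : Λ, gaussShiftSum c coef (lam : ℝ) = a lam

/-- A complete interpolating sequence is one that is both sampling and interpolating. -/
def IsCompleteInterpolatingV2 (c : ℂ) (Λ : Set ℝ) : Prop :=
  IsSamplingV2 c Λ ∧ IsInterpolatingV2 c Λ

/-- Lower Beurling density `D⁻(Λ) = lim_{r→∞} inf_x card(Λ ∩ [x,x+r]) / r`. -/
noncomputable def lowerBeurlingDensity (Λ : Set ℝ) : ℝ :=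
  liminf (fun r : ℝ => (⨅ x : ℝ, ((Λ ∩ Set.Icc x (x + r)).ncard : ℝ)) / r) atTop

/-- Upper Beurling density `D⁺(Λ) = lim_{r→∞} sup_x card(Λ ∩ [x,x+r]) / r`. -/
noncomputable def upperBeurlingDensity (Λ : Set ℝ) : ℝ :=
  limsup (fun r : ℝ => (⨆ x : ℝ, ((Λ ∩ Set.Icc x (x + r)).ncard : ℝ)) / r) atTop

lemma cgauss (a x : ℝ) (n : ℤ) :
    Complex.exp (-(a:ℂ) * ((x:ℂ) - (n:ℂ))^2)
      = ((Real.exp (-(a * (x - (n:ℝ))^2)) : ℝ) : ℂ) := by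
  rw [Complex.ofReal_exp]
  congr 1
  push_cast
  ring

noncomputable def psi (b : ℝ) (j : ℤ) : ℝ :=
  Real.exp (-b * (max ((|j| : ℝ) - 2) 0)^2)

lemma psi_nonneg (b : ℝ) (j : ℤ) : 0 ≤ psi b j := Real.exp_nonneg _

lemma summable_psi {b : ℝ} (hb : 0 < b) : Summable (psi b) := by
  have key : ∀ j : ℤ, psi b j ≤ Real.exp (b * 3) * Real.exp (-b) ^ (|j|.toNat) := by
    intro j
    rw [← Real.exp_nat_mul, ← Real.exp_add]
    unfold psi
    apply Real.exp_le_exp.2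
    have hj' : (|j|.toNat : ℤ) = |j| := Int.toNat_of_nonneg (abs_nonneg j)
    have hj : ((|j|.toNat : ℕ) : ℝ) = (|j| : ℝ) := by exact_mod_cast congrArg (fun z : ℤ => (z : ℝ)) hj'
    rw [hj]
    set x : ℝ := (|j| : ℝ) with hx
    have hx0 : 0 ≤ x := by positivity
    rcases le_or_gt x 3 with h | h
    · have : max (x - 2) 0 ≥ 0 := le_max_right _ _
      nlinarith [sq_nonneg (max (x - 2) 0)]
    · have hm : max (x - 2) 0 = x - 2 := max_eq_left (by linarith)
      rw [hm]
      nlinarith [sq_nonneg (x - 3)]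
  apply Summable.of_nonneg_of_le (fun j => psi_nonneg b j) key
  apply Summable.mul_left
  have h1 : Summable (fun n : ℕ => Real.exp (-b) ^ n) :=
    summable_geometric_of_lt_one (Real.exp_nonneg _) (Real.exp_lt_one_iff.2 (by linarith))
  apply (summable_int_iff_summable_nat_and_neg).2
  constructor
  · apply h1.congr; intro n; simp
  · apply h1.congr; intro n; simp

noncomputable def Sgauss (b : ℝ) : ℝ := ∑' j : ℤ, psi b j

lemma Sgauss_nonneg (b : ℝ) : 0 ≤ Sgauss b := tsum_nonneg (psi_nonneg b)

lemma gauss_le_psi {b : ℝ} (hb : 0 < b) {x t : ℝ} {j : ℤ} (h : max ((|j|:ℝ) - 2) 0 ≤ |x - t|) :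
    Real.exp (-b * (x - t)^2) ≤ psi b j := by
  unfold psi
  apply Real.exp_le_exp.2
  have h0 : (0:ℝ) ≤ max ((|j|:ℝ) - 2) 0 := le_max_right _ _
  have h1 : (max ((|j|:ℝ)-2) 0)^2 ≤ (x-t)^2 := by
    rw [← sq_abs (x - t)]; exact pow_le_pow_left₀ h0 h 2
  nlinarith [h1]

lemma finset_gauss_le {b : ℝ} (hb : 0 < b) (T : Finset ℤ) (x : ℝ) :
    ∑ n ∈ T, Real.exp (-b * (x - (n:ℝ))^2) ≤ Sgauss b := by
  have key : ∀ n ∈ T, Real.exp (-b * (x - (n:ℝ))^2) ≤ psi b (n - ⌊x⌋) := by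
    intro n _
    apply gauss_le_psi hb
    apply max_le _ (abs_nonneg _)
    have h1 : (⌊x⌋ : ℝ) ≤ x := Int.floor_le x
    have h2 : x < ⌊x⌋ + 1 := Int.lt_floor_add_one x
    push_cast
    rw [abs_sub_comm x (n:ℝ)]
    have h4 := abs_sub_abs_le_abs_sub ((n:ℝ) - ⌊x⌋) ((n:ℝ) - x)
    have h3 : |(n:ℝ) - ⌊x⌋ - ((n:ℝ) - x)| ≤ 1 := by
      rw [show (n:ℝ) - ⌊x⌋ - ((n:ℝ) - x) = x - ⌊x⌋ by ring, abs_of_nonneg (by linarith)]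
      linarith
    linarith
  calc ∑ n ∈ T, Real.exp (-b * (x - (n:ℝ))^2) ≤ ∑ n ∈ T, psi b (n - ⌊x⌋) :=
        Finset.sum_le_sum key
    _ = ∑ j ∈ T.image (· - ⌊x⌋), psi b j := by
        rw [Finset.sum_image]
        intro y _ z _ h
        exact sub_left_injective h
    _ ≤ Sgauss b := Summable.sum_le_tsum _ (fun _ _ => psi_nonneg b _) (summable_psi hb)

/-- tsum over a finite set subtype, bounded by card times bound -/
lemma tsum_finite_le {S : Set ℝ} (hS : S.Finite) (g : ℝ → ENNReal) (M : ENNReal)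
    (hg : ∀ x ∈ S, g x ≤ M) : ∑' (x : S), g (x : ℝ) ≤ S.ncard * M := by
  classical
  have : ∑' (x : S), g (x : ℝ) = ∑ x ∈ hS.toFinset, g x := by
    rw [tsum_subtype]
    rw [tsum_eq_sum (s := hS.toFinset)]
    · apply Finset.sum_congr rfl
      intro x hx
      rw [Set.indicator_of_mem (hS.mem_toFinset.1 hx)]
    · intro x hx
      rw [Set.indicator_of_notMem (fun hxS => hx (hS.mem_toFinset.2 hxS))]
  rw [this]
  calc ∑ x ∈ hS.toFinset, g x ≤ ∑ _x ∈ hS.toFinset, M :=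
        Finset.sum_le_sum (fun x hx => hg x (hS.mem_toFinset.1 hx))
    _ = hS.toFinset.card * M := by rw [Finset.sum_const, nsmul_eq_mul]
    _ = S.ncard * M := by rw [Set.ncard_eq_toFinset_card S hS]
  
/-- master lemma: sums over a relatively-separated set, cell by cell -/
lemma tsum_cells_le {Λ : Set ℝ} {K : ℕ}
    (hK : ∀ m : ℤ, (Λ ∩ Set.Ico (m:ℝ) (m+1)).Finite ∧ (Λ ∩ Set.Ico (m:ℝ) (m+1)).ncard ≤ K)
    (g : ℝ → ENNReal) (G : ℤ → ENNReal)
    (hg : ∀ m : ℤ, ∀ x ∈ Λ ∩ Set.Ico (m:ℝ) (m+1), g x ≤ G m) :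
    ∑' (x : Λ), g (x : ℝ) ≤ (K : ENNReal) * ∑' m : ℤ, G m := by
  classical
  rw [tsum_subtype]
  have step1 : ∑' (x : ℝ), Λ.indicator g x ≤ ∑' (x : ℝ) (m : ℤ), (Λ ∩ Set.Ico (m:ℝ) (m+1)).indicator g x := by
    apply ENNReal.tsum_le_tsum
    intro x
    by_cases hx : x ∈ Λ
    · rw [Set.indicator_of_mem hx]
      have hmem : x ∈ Λ ∩ Set.Ico ((⌊x⌋:ℝ)) (⌊x⌋+1) :=
        ⟨hx, Int.floor_le x, Int.lt_floor_add_one x⟩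
      calc g x = (Λ ∩ Set.Ico ((⌊x⌋:ℝ)) (⌊x⌋+1)).indicator g x := by
            rw [Set.indicator_of_mem hmem]
        _ ≤ _ := ENNReal.le_tsum ⌊x⌋
    · rw [Set.indicator_of_notMem hx]
      exact zero_le
  rw [ENNReal.tsum_comm] at step1
  refine step1.trans ?_
  rw [← ENNReal.tsum_mul_left]
  apply ENNReal.tsum_le_tsum
  intro m
  rw [← tsum_subtype]
  calc ∑' (x : (Λ ∩ Set.Ico ((m:ℝ)) (m+1) : Set ℝ)), g (x:ℝ)
      ≤ (Λ ∩ Set.Ico ((m:ℝ)) (m+1)).ncard * G m :=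
        tsum_finite_le (hK m).1 g (G m) (hg m)
    _ ≤ K * G m := by
        apply mul_le_mul_left
        exact_mod_cast Nat.cast_le.2 (hK m).2

/-- the Λ-sum of a gaussian centered anywhere is uniformly small -/
lemma tsum_cells_gauss_le {Λ : Set ℝ} {K : ℕ}
    (hK : ∀ m : ℤ, (Λ ∩ Set.Ico (m:ℝ) (m+1)).Finite ∧ (Λ ∩ Set.Ico (m:ℝ) (m+1)).ncard ≤ K)
    {b : ℝ} (hb : 0 < b) (t : ℝ) :
    ∑' (x : Λ), ENNReal.ofReal (Real.exp (-b * ((x:ℝ) - t)^2))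
      ≤ (K : ENNReal) * ENNReal.ofReal (Sgauss b) := by
  have := tsum_cells_le hK (fun x => ENNReal.ofReal (Real.exp (-b * (x - t)^2)))
    (fun m => ENNReal.ofReal (psi b (m - ⌊t⌋))) ?_
  · refine this.trans ?_
    apply mul_le_mul_right
    calc ∑' (m : ℤ), ENNReal.ofReal (psi b (m - ⌊t⌋))
        = ∑' (m : ℤ), ENNReal.ofReal (psi b m) :=
          (Equiv.subRight (⌊t⌋)).tsum_eq (fun m => ENNReal.ofReal (psi b m))
      _ = ENNReal.ofReal (Sgauss b) :=
          (ENNReal.ofReal_tsum_of_nonneg (psi_nonneg b) (summable_psi hb)).symm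
      _ ≤ ENNReal.ofReal (Sgauss b) := le_rfl
  · intro m x hx
    apply ENNReal.ofReal_le_ofReal
    apply gauss_le_psi hb
    apply max_le _ (abs_nonneg _)
    obtain ⟨-, hx1, hx2⟩ := hx
    have h1 : (⌊t⌋ : ℝ) ≤ t := Int.floor_le t
    have h2 : t < ⌊t⌋ + 1 := Int.lt_floor_add_one t
    push_cast
    have h4 := abs_sub_abs_le_abs_sub ((m:ℝ) - ⌊t⌋) ((m:ℝ) - t + (x - (m:ℝ)))
    have h5 : |(m:ℝ) - ⌊t⌋ - ((m:ℝ) - t + (x - (m:ℝ)))| ≤ 2 := by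
      rw [show (m:ℝ) - ⌊t⌋ - ((m:ℝ) - t + (x - (m:ℝ))) = (t - ⌊t⌋) - (x - m) by ring]
      have : |(t - (⌊t⌋:ℝ)) - (x - m)| ≤ |t - (⌊t⌋:ℝ)| + |x - (m:ℝ)| := abs_sub _ _
      have e1 : |t - (⌊t⌋:ℝ)| ≤ 1 := by rw [abs_of_nonneg (by linarith)]; linarith
      have e2 : |x - (m:ℝ)| ≤ 1 := by rw [abs_of_nonneg (by linarith)]; linarith
      linarith
    have : (m:ℝ) - t + (x - (m:ℝ)) = x - t := by ring
    rw [this] at h4 h5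
    linarith

lemma finite_card_of_summable {S : Set ℝ} (f : ℝ → ℝ) (hf : ∀ x, 0 ≤ f x)
    (hsum : Summable (fun x : S => f (x:ℝ))) {B : ℝ} (hB : ∑' (x : S), f (x:ℝ) ≤ B)
    {C : Set ℝ} (hC : C ⊆ S) {δ : ℝ} (hδ : 0 < δ)
    (hlow : ∀ x ∈ C, δ ≤ f x) : C.Finite ∧ (C.ncard : ℝ) ≤ B / δ := by
  classical
  have hev : ∀ᶠ (x : S) in cofinite, f (x:ℝ) < δ :=
    hsum.tendsto_cofinite_zero.eventually (gt_mem_nhds hδ)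
  rw [Filter.eventually_cofinite] at hev
  have hCfin : C.Finite := by
    apply (hev.image Subtype.val).subset
    intro x hx
    exact ⟨⟨x, hC hx⟩, by simpa using not_lt.2 (hlow x hx), rfl⟩
  refine ⟨hCfin, ?_⟩
  haveI : Fintype C := hCfin.fintype
  have hsumC : Summable (fun x : C => f (x:ℝ)) := by
    apply hsum.comp_injective (i := Set.inclusion hC) (Set.inclusion_injective hC)
  have h1 : ∑' (x : C), f (x:ℝ) ≤ ∑' (x : S), f (x:ℝ) := by
    apply Summable.tsum_le_tsum_of_inj (Set.inclusion hC) (Set.inclusion_injective hC)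
      (fun c _ => hf c) (fun b => le_rfl) hsumC hsum
  have h2 : (C.ncard : ℝ) * δ ≤ ∑' (x : C), f (x:ℝ) := by
    rw [tsum_fintype]
    have := Finset.card_nsmul_le_sum (Finset.univ : Finset C) (fun x => f (x:ℝ)) δ
      (fun x _ => hlow x x.2)
    rw [nsmul_eq_mul] at this
    have hcard : (Finset.univ : Finset C).card = C.ncard := by
      rw [Set.ncard_eq_toFinset_card' C, Set.toFinset_card, Finset.card_univ]
    rw [hcard] at this
    exact this
  rw [le_div_iff₀ hδ]
  linarith

lemma cell_bounds {a A B : ℝ} {Λ : Set ℝ} (ha : 0 < a) (hA : 0 < A) (hB : 0 < B)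
    (h : ∀ coef : ℤ → ℂ, Summable (fun n => ‖coef n‖ ^ 2) →
      A * (∑' n : ℤ, ‖coef n‖ ^ 2) ≤ (∑' lam : Λ, ‖gaussShiftSum (a:ℂ) coef (lam : ℝ)‖ ^ 2) ∧
      (∑' lam : Λ, ‖gaussShiftSum (a:ℂ) coef (lam : ℝ)‖ ^ 2) ≤ B * (∑' n : ℤ, ‖coef n‖ ^ 2)) :
    ∃ K : ℕ, 0 < K ∧ ∀ m : ℤ,
      (Λ ∩ Set.Ico (m:ℝ) ((m:ℝ)+1)).Finite ∧ (Λ ∩ Set.Ico (m:ℝ) ((m:ℝ)+1)).ncard ≤ K := by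
  classical
  set δ : ℝ := Real.exp (-(2*a)) with hδdef
  have hδ : 0 < δ := Real.exp_pos _
  refine ⟨⌈B / δ⌉₊ + 1, Nat.succ_pos _, fun m => ?_⟩
  set coef : ℤ → ℂ := fun n => if n = m then (1:ℂ) else 0 with hcoef
  have hsumc : Summable (fun n => ‖coef n‖ ^ 2) := by
    apply summable_of_ne_finset_zero (s := {m})
    intro n hn
    simp only [Finset.mem_singleton] at hn
    simp [hcoef, hn]
  have htsum1 : (∑' n : ℤ, ‖coef n‖ ^ 2) = 1 := by
    rw [tsum_eq_single m]
    · simp [hcoef]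
    · intro n hn; simp [hcoef, hn]
  have hgss : ∀ x : ℝ, gaussShiftSum (a:ℂ) coef x
      = ((Real.exp (-(a * (x - (m:ℝ))^2)) : ℝ) : ℂ) := by
    intro x
    rw [gaussShiftSum, tsum_eq_single m]
    · simp only [hcoef, if_pos rfl, one_mul]
      exact cgauss a x m
    · intro n hn; simp [hcoef, hn]
  have hval : ∀ x : ℝ, ‖gaussShiftSum (a:ℂ) coef x‖ ^ 2
      = Real.exp (-(2*a) * (x - (m:ℝ))^2) := by
    intro x
    rw [hgss x, Complex.norm_real, Real.norm_eq_abs, Real.abs_exp, sq, ← Real.exp_add]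
    congr 1
    ring
  obtain ⟨hlow, hup⟩ := h coef hsumc
  rw [htsum1, mul_one] at hlow hup
  have hpos : 0 < ∑' (lam : Λ), ‖gaussShiftSum (a:ℂ) coef (lam:ℝ)‖ ^ 2 := lt_of_lt_of_le hA hlow
  have hsumS : Summable (fun lam : Λ => ‖gaussShiftSum (a:ℂ) coef (lam:ℝ)‖ ^ 2) := by
    by_contra hns
    rw [tsum_eq_zero_of_not_summable hns] at hpos
    exact lt_irrefl 0 hpos
  have hlowval : ∀ x ∈ Λ ∩ Set.Ico (m:ℝ) ((m:ℝ)+1), δ ≤ ‖gaussShiftSum (a:ℂ) coef x‖ ^ 2 := by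
    intro x hx
    rw [hval x]
    apply Real.exp_le_exp.2
    obtain ⟨-, hx1, hx2⟩ := hx
    have hsq : (x - (m:ℝ))^2 ≤ 1 := by nlinarith
    nlinarith
  have hfc := finite_card_of_summable (fun x => ‖gaussShiftSum (a:ℂ) coef x‖ ^ 2)
    (fun x => by positivity) hsumS hup (Set.inter_subset_left) hδ hlowval
  refine ⟨hfc.1, ?_⟩
  have h2 : (((Λ ∩ Set.Ico (m:ℝ) ((m:ℝ)+1)).ncard : ℝ)) ≤ B / δ := hfc.2
  have h3 : B / δ ≤ (⌈B / δ⌉₊ : ℝ) := Nat.le_ceil _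
  have h4 : ((Λ ∩ Set.Ico (m:ℝ) ((m:ℝ)+1)).ncard : ℝ) ≤ ((⌈B / δ⌉₊ + 1 : ℕ) : ℝ) := by
    push_cast; linarith
  exact_mod_cast h4

/-- decomposition into separated pieces -/
lemma decomp {Λ : Set ℝ} {K : ℕ} (hK0 : 0 < K)
    (hK : ∀ m : ℤ, (Λ ∩ Set.Ico (m:ℝ) ((m:ℝ)+1)).Finite ∧ (Λ ∩ Set.Ico (m:ℝ) ((m:ℝ)+1)).ncard ≤ K) :
    ∃ (k : ℕ) (Λs : Fin k → Set ℝ), (∀ i, IsSeparatedSet (Λs i)) ∧ Λ = ⋃ i, Λs i := by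
  classical
  set cell : ℤ → Set ℝ := fun m => Λ ∩ Set.Ico (m:ℝ) ((m:ℝ)+1) with hcell
  set rank : ℝ → ℕ := fun x => {y ∈ Λ | ⌊y⌋ = ⌊x⌋ ∧ y < x}.ncard with hrank
  have hsub : ∀ x ∈ Λ, {y ∈ Λ | ⌊y⌋ = ⌊x⌋ ∧ y < x} ⊆ cell ⌊x⌋ := by
    intro x _ y ⟨hy1, hy2, _⟩
    exact ⟨hy1, by rw [← hy2]; exact ⟨Int.floor_le y, Int.lt_floor_add_one y⟩⟩
  have hrank_lt : ∀ x ∈ Λ, rank x < K := by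
    intro x hx
    have h1 : {y ∈ Λ | ⌊y⌋ = ⌊x⌋ ∧ y < x} ⊂ cell ⌊x⌋ := by
      refine ⟨hsub x hx, fun hcon => ?_⟩
      have hxc : x ∈ cell ⌊x⌋ := ⟨hx, Int.floor_le x, Int.lt_floor_add_one x⟩
      obtain ⟨-, -, hlt⟩ := hcon hxc
      exact lt_irrefl x hlt
    calc rank x < (cell ⌊x⌋).ncard := Set.ncard_lt_ncard h1 (hK ⌊x⌋).1
      _ ≤ K := (hK ⌊x⌋).2
  -- rank is injective on points with the same floor
  have hrank_inj : ∀ x ∈ Λ, ∀ y ∈ Λ, ⌊x⌋ = ⌊y⌋ → rank x = rank y → x = y := by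
    intro x hx y hy hf hr
    by_contra hne
    wlog hlt : y < x generalizing x y
    · exact this y hy x hx hf.symm hr.symm (Ne.symm hne) (lt_of_le_of_ne (not_lt.1 hlt) hne)
    have hss : {z ∈ Λ | ⌊z⌋ = ⌊y⌋ ∧ z < y} ⊂ {z ∈ Λ | ⌊z⌋ = ⌊x⌋ ∧ z < x} := by
      constructor
      · rintro z ⟨hz1, hz2, hz3⟩
        exact ⟨hz1, by rw [hz2, hf], lt_trans hz3 hlt⟩
      · intro hcon
        obtain ⟨-, -, hyy⟩ := hcon ⟨hy, hf.symm, hlt⟩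
        exact lt_irrefl y hyy
    have := Set.ncard_lt_ncard hss (((hK ⌊x⌋).1).subset (hsub x hx))
    rw [hrank] at hr
    simp only at hr
    omega
  set par : ℝ → ℕ := fun x => (⌊x⌋ % 2).toNat with hpar
  have hpar_le : ∀ x : ℝ, par x ≤ 1 := by
    intro x
    have h1 : 0 ≤ ⌊x⌋ % 2 := Int.emod_nonneg _ (by norm_num)
    have h2 : ⌊x⌋ % 2 < 2 := Int.emod_lt_of_pos _ (by norm_num)
    simp only [hpar]
    omega
  refine ⟨2 * K, fun i => {x ∈ Λ | 2 * rank x + par x = (i : ℕ)}, fun i => ?_, ?_⟩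
  · refine ⟨1, one_pos, ?_⟩
    rintro x ⟨hx, hcx⟩ y ⟨hy, hcy⟩ hne
    have hcode : rank x = rank y ∧ par x = par y := by
      have := hpar_le x; have := hpar_le y; omega
    have hfl : ⌊x⌋ ≠ ⌊y⌋ := fun hf => hne (hrank_inj x hx y hy hf hcode.1)
    have hmod : ⌊x⌋ % 2 = ⌊y⌋ % 2 := by
      have h1 : 0 ≤ ⌊x⌋ % 2 := Int.emod_nonneg _ (by norm_num)
      have h2 : ⌊x⌋ % 2 < 2 := Int.emod_lt_of_pos _ (by norm_num)
      have h3 : 0 ≤ ⌊y⌋ % 2 := Int.emod_nonneg _ (by norm_num)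
      have h4 : ⌊y⌋ % 2 < 2 := Int.emod_lt_of_pos _ (by norm_num)
      have := hcode.2
      rw [hpar] at this
      simp only at this
      omega
    have hgap : ⌊x⌋ + 2 ≤ ⌊y⌋ ∨ ⌊y⌋ + 2 ≤ ⌊x⌋ := by omega
    have bx1 : ((⌊x⌋:ℝ)) ≤ x := Int.floor_le x
    have bx2 : x < ⌊x⌋ + 1 := Int.lt_floor_add_one x
    have by1 : ((⌊y⌋:ℝ)) ≤ y := Int.floor_le y
    have by2 : y < ⌊y⌋ + 1 := Int.lt_floor_add_one y
    rcases hgap with hg | hg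
    · have : ((⌊x⌋:ℝ)) + 2 ≤ ((⌊y⌋:ℝ)) := by exact_mod_cast hg
      rw [abs_sub_comm, abs_of_nonneg (by linarith)]
      linarith
    · have : ((⌊y⌋:ℝ)) + 2 ≤ ((⌊x⌋:ℝ)) := by exact_mod_cast hg
      rw [abs_of_nonneg (by linarith)]
      linarith
  · ext x
    simp only [Set.mem_iUnion]
    constructor
    · intro hx
      have hlt : 2 * rank x + par x < 2 * K := by
        have := hrank_lt x hx; have := hpar_le x; omega
      exact ⟨⟨2 * rank x + par x, hlt⟩, hx, rfl⟩
    · rintro ⟨i, hx, -⟩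
      exact hx

/-- maximal separated subset via Zorn -/
lemma exists_maximal_separated (Λ : Set ℝ) {ε : ℝ} (hε : 0 < ε) :
    ∃ M ⊆ Λ, (∀ x ∈ M, ∀ y ∈ M, x ≠ y → ε ≤ |x - y|) ∧
      ∀ lam ∈ Λ, ∃ y ∈ M, |lam - y| < ε := by
  set S : Set (Set ℝ) := {s | s ⊆ Λ ∧ ∀ x ∈ s, ∀ y ∈ s, x ≠ y → ε ≤ |x - y|} with hS
  have hzorn := zorn_subset_nonempty S ?_ ∅ ⟨Set.empty_subset _, by simp⟩
  · obtain ⟨M, -, hMax⟩ := hzorn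
    obtain ⟨hMΛ, hMsep⟩ := hMax.1
    refine ⟨M, hMΛ, hMsep, ?_⟩
    intro lam hlam
    by_cases hmem : lam ∈ M
    · exact ⟨lam, hmem, by simp [hε]⟩
    by_contra hcon
    push_neg at hcon
    have hins : insert lam M ∈ S := by
      refine ⟨Set.insert_subset hlam hMΛ, ?_⟩
      rintro x (rfl | hx) y (rfl | hy) hne
      · exact absurd rfl hne
      · exact hcon y hy
      · rw [abs_sub_comm]; exact hcon x hx
      · exact hMsep x hx y hy hne
    have := hMax.2 hins (Set.subset_insert lam M)
    exact hmem (this (Set.mem_insert lam M))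
  · intro c hcS hchain hcne
    refine ⟨⋃₀ c, ⟨?_, ?_⟩, fun s hs => Set.subset_sUnion_of_mem hs⟩
    · exact Set.sUnion_subset (fun s hs => (hcS hs).1)
    · rintro x hx y hy hne
      obtain ⟨sx, hsx, hxsx⟩ := hx
      obtain ⟨sy, hsy, hysy⟩ := hy
      rcases hchain.total hsx hsy with hss | hss
      · exact (hcS hsy).2 x (hss hxsx) y hysy hne
      · exact (hcS hsx).2 x hxsx y (hss hysy) hne

/-- derivative bound constant for the gaussian -/
lemma osc_bound {a : ℝ} (ha : 0 < a) : ∃ C > 0, ∀ ε : ℝ, 0 < ε → ε ≤ 1 → ∀ s t : ℝ, |s - t| ≤ ε →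
    |Real.exp (-(a * s^2)) - Real.exp (-(a * t^2))| ≤ ε * C * Real.exp (-(a/8 * s^2)) := by
  set D : ℝ := 2 * (2*a+1)^2 / (7*a) with hD
  set C : ℝ := 2 * a * Real.exp D with hC
  have hC0 : 0 < C := by positivity
  refine ⟨C, hC0, fun ε hε hε1 s t hst => ?_⟩
  set g : ℝ → ℝ := fun u => Real.exp (-(a * u^2)) with hg
  have hderiv : ∀ u : ℝ, HasDerivAt g (Real.exp (-(a * u^2)) * (-(a * (2*u)))) u := by
    intro u
    have h1 : HasDerivAt (fun u : ℝ => -(a * u^2)) (-(a * (2*u))) u := by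
      have := ((hasDerivAt_pow 2 u).const_mul a).neg
      exact this.congr_deriv (by norm_num)
    exact h1.exp
  have hbound : ∀ u ∈ Set.uIcc s t, ‖deriv g u‖ ≤ C * Real.exp (-(a/8 * s^2)) := by
    intro u hu
    have hus : |u - s| ≤ ε := by
      obtain ⟨h3, h4⟩ := abs_le.1 hst
      rcases Set.mem_uIcc.1 hu with ⟨h1, h2⟩ | ⟨h1, h2⟩ <;>
        exact abs_le.2 ⟨by linarith, by linarith⟩
    rw [(hderiv u).deriv]
    have husl : |s| - 1 ≤ |u| := by
      have := abs_sub_abs_le_abs_sub s u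
      rw [abs_sub_comm] at hus
      linarith [abs_abs u]
    have huu : |u| ≤ |s| + 1 := by
      have := abs_sub_abs_le_abs_sub u s
      linarith
    have hu2 : s^2 - 2*|s| ≤ u^2 := by
      rcases le_or_gt (|s|) 1 with h | h
      · nlinarith [sq_nonneg u, sq_abs s, abs_nonneg s]
      · nlinarith [sq_abs u, sq_abs s, abs_nonneg s, abs_nonneg u]
    have hexp : Real.exp (-(a * u^2)) ≤ Real.exp (2*a*|s| - a*s^2) := by
      apply Real.exp_le_exp.2; nlinarith
    have habs : ‖Real.exp (-(a * u^2)) * (-(a * (2*u)))‖ = 2*a*|u| * Real.exp (-(a * u^2)) := by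
      rw [Real.norm_eq_abs, abs_mul, Real.abs_exp, abs_neg, abs_mul, abs_mul]
      rw [abs_of_nonneg (le_of_lt ha), abs_of_nonneg (by norm_num : (0:ℝ) ≤ 2)]
      ring
    rw [habs]
    have hu_exp : |u| ≤ Real.exp |s| := by
      calc |u| ≤ |s| + 1 := huu
        _ ≤ Real.exp |s| := Real.add_one_le_exp _
    calc 2*a*|u| * Real.exp (-(a * u^2))
        ≤ 2*a*Real.exp |s| * Real.exp (2*a*|s| - a*s^2) := by
          apply mul_le_mul (by nlinarith [abs_nonneg u]) hexp (Real.exp_nonneg _) (by positivity)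
      _ = 2*a * Real.exp ((2*a+1)*|s| - a*s^2) := by rw [mul_assoc, ← Real.exp_add]; ring_nf
      _ ≤ 2*a * Real.exp (D - a/8 * s^2) := by
          apply mul_le_mul_of_nonneg_left (Real.exp_le_exp.2 ?_) (by positivity)
          have h7 : (0:ℝ) < 7 * a := by linarith
          have hDval : D * (7*a) = 2*(2*a+1)^2 := by
            rw [hD]; field_simp
          nlinarith [sq_nonneg (7*a*|s| - 4*(2*a+1)), sq_abs s, h7, hDval]
      _ = C * Real.exp (-(a/8 * s^2)) := by
          rw [hC, show 2*a*Real.exp D * Real.exp (-(a/8*s^2)) = 2*a*(Real.exp D * Real.exp (-(a/8*s^2))) from by ring,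
            ← Real.exp_add, sub_eq_add_neg]
  have hdiff : ∀ u ∈ Set.uIcc s t, DifferentiableAt ℝ g u := fun u _ => (hderiv u).differentiableAt
  have := Convex.norm_image_sub_le_of_norm_deriv_le hdiff hbound (convex_uIcc s t)
    (Set.left_mem_uIcc) (Set.right_mem_uIcc)
  rw [Real.norm_eq_abs, Real.norm_eq_abs] at this
  calc |g s - g t| = |g t - g s| := abs_sub_comm _ _
    _ ≤ C * Real.exp (-(a/8 * s^2)) * |t - s| := this
    _ ≤ C * Real.exp (-(a/8 * s^2)) * ε := by
        apply mul_le_mul_of_nonneg_left _ (by positivity)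
        rw [abs_sub_comm]; exact hst
    _ = ε * C * Real.exp (-(a/8 * s^2)) := by ring

/-- kernel vector for an underdetermined linear system -/
lemma exists_kernel_coef (T : Finset ℤ) (F : Finset ℝ) (hcard : F.card < T.card) (E : ℝ → ℤ → ℂ) :
    ∃ coef : ℤ → ℂ, (∀ n, n ∉ T → coef n = 0) ∧ coef ≠ 0 ∧
      ∀ x ∈ F, ∑ n ∈ T, coef n * E x n = 0 := by
  classical
  set Φ : (↥T → ℂ) →ₗ[ℂ] (↥F → ℂ) := {
    toFun := fun v i => ∑ n : T, v n * E (i : ℝ) (n : ℤ)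
    map_add' := by
      intro v w
      funext i
      simp [add_mul, Finset.sum_add_distrib]
    map_smul' := by
      intro c v
      funext i
      simp [Finset.mul_sum, mul_assoc]
  } with hΦ
  have hnotinj : ¬ Function.Injective Φ := by
    intro hinj
    have := LinearMap.finrank_le_finrank_of_injective hinj
    rw [Module.finrank_pi, Module.finrank_pi] at this
    simp only [Fintype.card_coe] at this
    omega
  have hker : ∃ v : ↥T → ℂ, v ≠ 0 ∧ Φ v = 0 := by
    rw [← LinearMap.ker_eq_bot] at hnotinj
    obtain ⟨v, hv1, hv2⟩ := Submodule.exists_mem_ne_zero_of_ne_bot hnotinj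
    exact ⟨v, hv2, hv1⟩
  obtain ⟨v, hv0, hvker⟩ := hker
  refine ⟨fun n => if h : n ∈ T then v ⟨n, h⟩ else 0, fun n hn => dif_neg hn, ?_, ?_⟩
  · intro hcon
    apply hv0
    funext ⟨n, hn⟩
    have := congrFun hcon n
    simpa [dif_pos hn] using this
  · intro x hx
    have := congrFun hvker ⟨x, hx⟩
    simp only [hΦ, LinearMap.coe_mk, AddHom.coe_mk, Pi.zero_apply] at this
    calc ∑ n ∈ T, (if h : n ∈ T then v ⟨n,h⟩ else 0) * E x n
        = ∑ n ∈ T.attach, (if h : ((n:ℤ)) ∈ T then v ⟨(n:ℤ),h⟩ else 0) * E x (n:ℤ) :=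
          (Finset.sum_attach T _).symm
      _ = ∑ n ∈ T.attach, v n * E x (n:ℤ) := Finset.sum_congr rfl (fun n _ => by rw [dif_pos n.2])
      _ = ∑ n : ↥T, v n * E x (n:ℤ) := by rw [Finset.univ_eq_attach]
      _ = 0 := this

lemma cs_sq (T : Finset ℤ) (c V : ℤ → ℝ) (hV : ∀ n, 0 ≤ V n) :
    (∑ n ∈ T, c n * V n)^2 ≤ (∑ n ∈ T, V n) * (∑ n ∈ T, (c n)^2 * V n) := by
  have key := Finset.sum_mul_sq_le_sq_mul_sq T (fun n => Real.sqrt (V n))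
    (fun n => c n * Real.sqrt (V n))
  have h1 : ∀ n, Real.sqrt (V n) * (c n * Real.sqrt (V n)) = c n * V n := by
    intro n
    rw [show Real.sqrt (V n) * (c n * Real.sqrt (V n)) = c n * (Real.sqrt (V n) * Real.sqrt (V n)) from by ring,
      Real.mul_self_sqrt (hV n)]
  have h2 : ∀ n, (Real.sqrt (V n))^2 = V n := fun n => Real.sq_sqrt (hV n)
  have h3 : ∀ n, (c n * Real.sqrt (V n))^2 = (c n)^2 * V n := by
    intro n; rw [mul_pow, h2 n]
  calc (∑ n ∈ T, c n * V n)^2 = (∑ n ∈ T, Real.sqrt (V n) * (c n * Real.sqrt (V n)))^2 := by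
        congr 1; exact (Finset.sum_congr rfl (fun n _ => h1 n)).symm
    _ ≤ (∑ n ∈ T, (Real.sqrt (V n))^2) * (∑ n ∈ T, (c n * Real.sqrt (V n))^2) := key
    _ = (∑ n ∈ T, V n) * (∑ n ∈ T, (c n)^2 * V n) := by
        rw [Finset.sum_congr rfl (fun n _ => h2 n), Finset.sum_congr rfl (fun n _ => h3 n)]

lemma lam_Icc_finite {Λ : Set ℝ} {K : ℕ}
    (hK : ∀ m : ℤ, (Λ ∩ Set.Ico (m:ℝ) ((m:ℝ)+1)).Finite ∧ (Λ ∩ Set.Ico (m:ℝ) ((m:ℝ)+1)).ncard ≤ K)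
    (u v : ℝ) : (Λ ∩ Set.Icc u v).Finite := by
  apply Set.Finite.subset (Set.Finite.biUnion (Finset.Icc ⌊u⌋ ⌊v⌋).finite_toSet
    (fun m _ => (hK m).1))
  rintro x ⟨hxΛ, hx1, hx2⟩
  have hm : ⌊x⌋ ∈ (Finset.Icc ⌊u⌋ ⌊v⌋ : Set ℤ) := by
    simp only [Finset.coe_Icc, Set.mem_Icc]
    exact ⟨Int.floor_le_floor hx1, Int.floor_le_floor hx2⟩
  exact Set.mem_biUnion hm ⟨hxΛ, Int.floor_le x, Int.lt_floor_add_one x⟩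

set_option maxHeartbeats 2000000 in

set_option maxHeartbeats 2000000 in
lemma window_count {a A B : ℝ} {Λ : Set ℝ} (ha : 0 < a) (hA : 0 < A) (hB : 0 < B)
    (h : ∀ coef : ℤ → ℂ, Summable (fun n => ‖coef n‖ ^ 2) →
      A * (∑' n : ℤ, ‖coef n‖ ^ 2) ≤ (∑' lam : Λ, ‖gaussShiftSum (a:ℂ) coef (lam : ℝ)‖ ^ 2) ∧
      (∑' lam : Λ, ‖gaussShiftSum (a:ℂ) coef (lam : ℝ)‖ ^ 2) ≤ B * (∑' n : ℤ, ‖coef n‖ ^ 2))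
    {K : ℕ} (hK0 : 0 < K)
    (hK : ∀ m : ℤ, (Λ ∩ Set.Ico (m:ℝ) ((m:ℝ)+1)).Finite ∧ (Λ ∩ Set.Ico (m:ℝ) ((m:ℝ)+1)).ncard ≤ K) :
    ∃ M ⊆ Λ, IsSeparatedSet M ∧ ∃ L : ℝ, 2 ≤ L ∧ ∀ α β : ℝ, α ≤ β →
      (Finset.Icc ⌈α⌉ ⌊β⌋).card ≤ (M ∩ Set.Icc (α - L) (β + L)).ncard := by
  classical
  obtain ⟨C₂, hC₂, hosc⟩ := osc_bound ha
  set S8 : ℝ := Sgauss (a/8) with hS8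
  set Sa : ℝ := Sgauss a with hSa
  set S2 : ℝ := Sgauss (a/2) with hS2
  have hS8n : 0 ≤ S8 := Sgauss_nonneg _
  have hSan : 0 ≤ Sa := Sgauss_nonneg _
  have hS2n : 0 ≤ S2 := Sgauss_nonneg _
  set D₁ : ℝ := C₂^2 * S8 * (K * S8) with hD₁
  set D₂ : ℝ := Sa * (K * S2) with hD₂
  have hD₁n : 0 ≤ D₁ := by positivity
  have hD₂n : 0 ≤ D₂ := by positivity
  set ε : ℝ := min 1 (Real.sqrt (A / (2*(D₁+1)))) with hεdef
  have hε : 0 < ε := lt_min one_pos (Real.sqrt_pos.2 (by positivity))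
  have hε1 : ε ≤ 1 := min_le_left _ _
  have hεD : ε^2 * D₁ ≤ A/2 := by
    have h1 : ε ≤ Real.sqrt (A / (2*(D₁+1))) := min_le_right _ _
    have h2 : ε^2 ≤ A / (2*(D₁+1)) := by
      calc ε^2 ≤ (Real.sqrt (A / (2*(D₁+1))))^2 := by
            apply pow_le_pow_left₀ (le_of_lt hε) h1
        _ = A / (2*(D₁+1)) := Real.sq_sqrt (by positivity)
    calc ε^2 * D₁ ≤ (A / (2*(D₁+1))) * (D₁+1) := by
          apply mul_le_mul h2 (by linarith) hD₁n (by positivity)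
      _ = A/2 := by field_simp
  obtain ⟨M, hMΛ, hMsep, hMcov⟩ := exists_maximal_separated Λ hε
  -- choose L
  obtain ⟨L, hLsmall, hL2⟩ : ∃ L : ℝ, Real.exp (-(a/2)*(L-1)^2) * D₂ < A/2 ∧ 2 ≤ L := by
    have htend : Tendsto (fun L : ℝ => Real.exp (-(a/2)*(L-1)^2) * D₂) atTop (nhds 0) := by
      have h1 : Tendsto (fun L : ℝ => (a/2)*(L-1)^2) atTop atTop := by
        apply Tendsto.const_mul_atTop (by positivity)
        exact (tendsto_pow_atTop (two_ne_zero)).comp (tendsto_atTop_add_const_right atTop (-1) tendsto_id)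
      have h2 : Tendsto (fun L : ℝ => Real.exp (-((a/2)*(L-1)^2))) atTop (nhds 0) :=
        Real.tendsto_exp_neg_atTop_nhds_zero.comp h1
      have h3 := h2.mul_const D₂
      rw [zero_mul] at h3
      apply h3.congr
      intro L
      congr 2
      ring
    have hev := (htend.eventually (gt_mem_nhds (half_pos hA))).and
      (eventually_ge_atTop (2:ℝ))
    obtain ⟨L, hL1, hL2⟩ := hev.exists
    exact ⟨L, hL1, hL2⟩
  refine ⟨M, hMΛ, ⟨ε, hε, hMsep⟩, L, hL2, ?_⟩
  intro α β hαβ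
  by_contra hlt
  push_neg at hlt
  -- the bad window
  have hMfin : (M ∩ Set.Icc (α - L) (β + L)).Finite := by
    apply Set.Finite.subset (lam_Icc_finite hK (α - L) (β + L))
    exact Set.inter_subset_inter_left _ hMΛ
  set F : Finset ℝ := hMfin.toFinset with hF
  have hFcard : F.card = (M ∩ Set.Icc (α - L) (β + L)).ncard :=
    (Set.ncard_eq_toFinset_card _ hMfin).symm
  set T : Finset ℤ := Finset.Icc ⌈α⌉ ⌊β⌋ with hT
  have hcard : F.card < T.card := by rw [hFcard]; exact hlt
  obtain ⟨coef, hcoef0, hcoefne, hker⟩ := exists_kernel_coef T F hcard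
    (fun x n => Complex.exp (-(a:ℂ) * ((x:ℂ) - (n:ℂ))^2))
  have hTn : ∀ n ∈ T, α ≤ (n:ℝ) ∧ (n:ℝ) ≤ β := by
    intro n hn
    rw [hT, Finset.mem_Icc] at hn
    constructor
    · calc α ≤ (⌈α⌉ : ℝ) := Int.le_ceil α
        _ ≤ (n:ℝ) := by exact_mod_cast hn.1
    · calc (n:ℝ) ≤ (⌊β⌋ : ℝ) := by exact_mod_cast hn.2
        _ ≤ β := Int.floor_le β
  have hgssT : ∀ x : ℝ, gaussShiftSum (a:ℂ) coef x
      = ∑ n ∈ T, coef n * Complex.exp (-(a:ℂ) * ((x:ℂ) - (n:ℂ))^2) := by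
    intro x
    apply tsum_eq_sum
    intro n hn
    rw [hcoef0 n hn, zero_mul]
  set N : ℝ := ∑ n ∈ T, ‖coef n‖^2 with hN
  have hsumc : Summable (fun n => ‖coef n‖ ^ 2) := by
    apply summable_of_ne_finset_zero (s := T)
    intro n hn
    rw [hcoef0 n hn]
    simp
  have htsumN : (∑' n : ℤ, ‖coef n‖ ^ 2) = N := by
    apply tsum_eq_sum
    intro n hn
    rw [hcoef0 n hn]; simp
  have hN0 : 0 < N := by
    obtain ⟨n₀, hn₀⟩ : ∃ n, coef n ≠ 0 := by
      by_contra hc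
      push_neg at hc
      exact hcoefne (funext hc)
    have hn₀T : n₀ ∈ T := by
      by_contra hc
      exact hn₀ (hcoef0 n₀ hc)
    apply Finset.sum_pos' (fun n _ => by positivity)
    exact ⟨n₀, hn₀T, by have h' : 0 < ‖coef n₀‖ := norm_pos_iff.2 hn₀; positivity⟩
  -- norm of the gaussian sums
  have hnorm_le : ∀ x : ℝ, ‖gaussShiftSum (a:ℂ) coef x‖
      ≤ ∑ n ∈ T, ‖coef n‖ * Real.exp (-a * (x - (n:ℝ))^2) := by
    intro x
    rw [hgssT x]
    refine (norm_sum_le _ _).trans (Finset.sum_le_sum ?_)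
    intro n _
    rw [norm_mul, cgauss, Complex.norm_real, Real.norm_eq_abs, Real.abs_exp]
    apply le_of_eq
    congr 1
    ring
  -- base Cauchy-Schwarz bound
  have hbase : ∀ x : ℝ, ‖gaussShiftSum (a:ℂ) coef x‖^2
      ≤ Sa * ∑ n ∈ T, ‖coef n‖^2 * Real.exp (-a * (x - (n:ℝ))^2) := by
    intro x
    calc ‖gaussShiftSum (a:ℂ) coef x‖^2
        ≤ (∑ n ∈ T, ‖coef n‖ * Real.exp (-a * (x - (n:ℝ))^2))^2 := by
          apply pow_le_pow_left₀ (norm_nonneg _) (hnorm_le x)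
      _ ≤ (∑ n ∈ T, Real.exp (-a * (x - (n:ℝ))^2)) * (∑ n ∈ T, ‖coef n‖^2 * Real.exp (-a * (x - (n:ℝ))^2)) :=
          cs_sq T _ _ (fun n => Real.exp_nonneg _)
      _ ≤ Sa * ∑ n ∈ T, ‖coef n‖^2 * Real.exp (-a * (x - (n:ℝ))^2) := by
          apply mul_le_mul_of_nonneg_right (finset_gauss_le ha T x)
          apply Finset.sum_nonneg
          intro n _
          positivity
  -- class 2 : far from the window
  have hclass2 : ∀ x : ℝ, (∀ n ∈ T, L - 1 ≤ |x - (n:ℝ)|) → ‖gaussShiftSum (a:ℂ) coef x‖^2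
      ≤ (Real.exp (-(a/2)*(L-1)^2) * Sa) * ∑ n ∈ T, ‖coef n‖^2 * Real.exp (-(a/2) * (x - (n:ℝ))^2) := by
    intro x hx
    refine (hbase x).trans ?_
    rw [show (Real.exp (-(a/2)*(L-1)^2) * Sa) * ∑ n ∈ T, ‖coef n‖^2 * Real.exp (-(a/2) * (x - (n:ℝ))^2)
      = Sa * ∑ n ∈ T, ‖coef n‖^2 * (Real.exp (-(a/2)*(L-1)^2) * Real.exp (-(a/2) * (x - (n:ℝ))^2)) from by
        rw [Finset.mul_sum, Finset.mul_sum]; apply Finset.sum_congr rfl; intro n _; ring]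
    apply mul_le_mul_of_nonneg_left _ hSan
    apply Finset.sum_le_sum
    intro n hn
    apply mul_le_mul_of_nonneg_left _ (by positivity)
    rw [← Real.exp_add]
    apply Real.exp_le_exp.2
    have h1 := hx n hn
    have h2 : (L-1)^2 ≤ (x - (n:ℝ))^2 := by
      have hL1 : (0:ℝ) ≤ L - 1 := by linarith
      calc (L-1)^2 ≤ |x - (n:ℝ)|^2 := by apply pow_le_pow_left₀ hL1 h1
        _ = (x - (n:ℝ))^2 := sq_abs _
    nlinarith
  -- class 1 : near a killed sample point
  have hclass1 : ∀ x y : ℝ, y ∈ M ∩ Set.Icc (α - L) (β + L) → |x - y| < ε →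
      ‖gaussShiftSum (a:ℂ) coef x‖^2
      ≤ (ε^2 * C₂^2 * S8) * ∑ n ∈ T, ‖coef n‖^2 * Real.exp (-(a/8) * (x - (n:ℝ))^2) := by
    intro x y hy hxy
    have hy0 : gaussShiftSum (a:ℂ) coef y = 0 := by
      rw [hgssT y]
      exact hker y (hMfin.mem_toFinset.2 hy)
    have hdiff : ‖gaussShiftSum (a:ℂ) coef x‖
        ≤ ∑ n ∈ T, ‖coef n‖ * (ε * C₂ * Real.exp (-(a/8) * (x - (n:ℝ))^2)) := by
      have : gaussShiftSum (a:ℂ) coef x = ∑ n ∈ T, coef n *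
          (Complex.exp (-(a:ℂ) * ((x:ℂ) - (n:ℂ))^2) - Complex.exp (-(a:ℂ) * ((y:ℂ) - (n:ℂ))^2)) := by
        rw [show ∑ n ∈ T, coef n * (Complex.exp (-(a:ℂ) * ((x:ℂ) - (n:ℂ))^2)
            - Complex.exp (-(a:ℂ) * ((y:ℂ) - (n:ℂ))^2))
          = (∑ n ∈ T, coef n * Complex.exp (-(a:ℂ) * ((x:ℂ) - (n:ℂ))^2))
            - ∑ n ∈ T, coef n * Complex.exp (-(a:ℂ) * ((y:ℂ) - (n:ℂ))^2) from by
            rw [← Finset.sum_sub_distrib]; apply Finset.sum_congr rfl; intro n _; ring]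
        rw [← hgssT x, ← hgssT y, hy0, sub_zero]
      rw [this]
      refine (norm_sum_le _ _).trans (Finset.sum_le_sum ?_)
      intro n _
      rw [norm_mul]
      apply mul_le_mul_of_nonneg_left _ (norm_nonneg _)
      rw [cgauss, cgauss, ← Complex.ofReal_sub, Complex.norm_real, Real.norm_eq_abs]
      have := hosc ε hε hε1 (x - (n:ℝ)) (y - (n:ℝ)) (by
        rw [show x - (n:ℝ) - (y - (n:ℝ)) = x - y from by ring]
        exact le_of_lt hxy)
      calc |Real.exp (-(a * (x - (n:ℝ))^2)) - Real.exp (-(a * (y - (n:ℝ))^2))|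
          ≤ ε * C₂ * Real.exp (-(a/8 * (x - (n:ℝ))^2)) := this
        _ = ε * C₂ * Real.exp (-(a/8) * (x - (n:ℝ))^2) := by rw [neg_mul]
    calc ‖gaussShiftSum (a:ℂ) coef x‖^2
        ≤ (∑ n ∈ T, ‖coef n‖ * (ε * C₂ * Real.exp (-(a/8) * (x - (n:ℝ))^2)))^2 := by
          apply pow_le_pow_left₀ (norm_nonneg _) hdiff
      _ = (ε * C₂)^2 * (∑ n ∈ T, ‖coef n‖ * Real.exp (-(a/8) * (x - (n:ℝ))^2))^2 := by
          have hpull : ∑ n ∈ T, ‖coef n‖ * (ε * C₂ * Real.exp (-(a/8) * (x - (n:ℝ))^2))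
              = (ε * C₂) * ∑ n ∈ T, ‖coef n‖ * Real.exp (-(a/8) * (x - (n:ℝ))^2) := by
            rw [Finset.mul_sum]
            apply Finset.sum_congr rfl
            intro n _
            ring
          rw [hpull, mul_pow]
      _ ≤ (ε * C₂)^2 * ((∑ n ∈ T, Real.exp (-(a/8) * (x - (n:ℝ))^2)) * (∑ n ∈ T, ‖coef n‖^2 * Real.exp (-(a/8) * (x - (n:ℝ))^2))) := by
          apply mul_le_mul_of_nonneg_left (cs_sq T _ _ (fun n => Real.exp_nonneg _)) (by positivity)
      _ ≤ (ε^2 * C₂^2 * S8) * ∑ n ∈ T, ‖coef n‖^2 * Real.exp (-(a/8) * (x - (n:ℝ))^2) := by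
          rw [show (ε^2 * C₂^2 * S8) * ∑ n ∈ T, ‖coef n‖^2 * Real.exp (-(a/8) * (x - (n:ℝ))^2)
            = (ε*C₂)^2 * (S8 * ∑ n ∈ T, ‖coef n‖^2 * Real.exp (-(a/8) * (x - (n:ℝ))^2)) from by ring]
          apply mul_le_mul_of_nonneg_left _ (by positivity)
          apply mul_le_mul_of_nonneg_right (finset_gauss_le (by positivity) T x)
          apply Finset.sum_nonneg; intro n _; positivity
  -- pointwise majorant over Λ
  have hpoint : ∀ lam : ↑Λ, ENNReal.ofReal (‖gaussShiftSum (a:ℂ) coef (lam:ℝ)‖^2)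
      ≤ ENNReal.ofReal ((ε^2*C₂^2*S8) * ∑ n ∈ T, ‖coef n‖^2 * Real.exp (-(a/8) * ((lam:ℝ) - (n:ℝ))^2))
        + ENNReal.ofReal ((Real.exp (-(a/2)*(L-1)^2) * Sa) * ∑ n ∈ T, ‖coef n‖^2 * Real.exp (-(a/2) * ((lam:ℝ) - (n:ℝ))^2)) := by
    intro lam
    obtain ⟨y, hyM, hy⟩ := hMcov lam lam.2
    by_cases hyin : y ∈ Set.Icc (α - L) (β + L)
    · exact le_trans (ENNReal.ofReal_le_ofReal (hclass1 lam y ⟨hyM, hyin⟩ hy)) le_self_add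
    · refine le_trans (ENNReal.ofReal_le_ofReal (hclass2 lam ?_)) le_add_self
      intro n hn
      obtain ⟨hn1, hn2⟩ := hTn n hn
      rw [Set.mem_Icc, not_and_or, not_le, not_le] at hyin
      obtain ⟨hy1, hy2⟩ := abs_lt.1 hy
      rcases hyin with hyl | hyr
      · have : L - 1 ≤ (n:ℝ) - lam := by linarith
        calc L - 1 ≤ (n:ℝ) - lam := this
          _ ≤ |(lam:ℝ) - n| := by rw [abs_sub_comm]; exact le_abs_self _
      · have : L - 1 ≤ (lam:ℝ) - n := by linarith
        exact this.trans (le_abs_self _)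
  -- generic sum bound
  have hsumbound : ∀ (c b : ℝ), 0 ≤ c → 0 < b →
      (∑' lam : ↑Λ, ENNReal.ofReal (c * ∑ n ∈ T, ‖coef n‖^2 * Real.exp (-b * ((lam:ℝ) - (n:ℝ))^2)))
        ≤ ENNReal.ofReal (c * ((K:ℝ) * Sgauss b) * N) := by
    intro c b hc hb
    have expand : ∀ lam : ↑Λ, ENNReal.ofReal (c * ∑ n ∈ T, ‖coef n‖^2 * Real.exp (-b * ((lam:ℝ) - (n:ℝ))^2))
        = ENNReal.ofReal c * ∑ n ∈ T, ENNReal.ofReal (‖coef n‖^2) * ENNReal.ofReal (Real.exp (-b * ((lam:ℝ) - (n:ℝ))^2)) := by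
      intro lam
      rw [ENNReal.ofReal_mul hc, ENNReal.ofReal_sum_of_nonneg (fun n _ => by positivity)]
      congr 1
      apply Finset.sum_congr rfl
      intro n _
      rw [ENNReal.ofReal_mul (by positivity)]
    calc ∑' lam : ↑Λ, ENNReal.ofReal (c * ∑ n ∈ T, ‖coef n‖^2 * Real.exp (-b * ((lam:ℝ) - (n:ℝ))^2))
        = ENNReal.ofReal c * ∑' lam : ↑Λ, ∑ n ∈ T, ENNReal.ofReal (‖coef n‖^2) * ENNReal.ofReal (Real.exp (-b * ((lam:ℝ) - (n:ℝ))^2)) := by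
          rw [← ENNReal.tsum_mul_left]
          exact tsum_congr expand
      _ = ENNReal.ofReal c * ∑ n ∈ T, ENNReal.ofReal (‖coef n‖^2) * ∑' lam : ↑Λ, ENNReal.ofReal (Real.exp (-b * ((lam:ℝ) - (n:ℝ))^2)) := by
          congr 1
          rw [Summable.tsum_finsetSum (fun n _ => ENNReal.summable)]
          apply Finset.sum_congr rfl
          intro n _
          rw [ENNReal.tsum_mul_left]
      _ ≤ ENNReal.ofReal c * ∑ n ∈ T, ENNReal.ofReal (‖coef n‖^2) * ((K : ENNReal) * ENNReal.ofReal (Sgauss b)) := by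
          apply mul_le_mul_right
          apply Finset.sum_le_sum
          intro n _
          exact mul_le_mul_right (tsum_cells_gauss_le hK hb ((n:ℤ):ℝ)) _
      _ = ENNReal.ofReal (c * ((K:ℝ) * Sgauss b) * N) := by
          rw [← Finset.sum_mul]
          rw [← ENNReal.ofReal_sum_of_nonneg (fun n _ => by positivity)]
          rw [show ((K : ENNReal) * ENNReal.ofReal (Sgauss b)) = ENNReal.ofReal ((K:ℝ) * Sgauss b) from by
            rw [ENNReal.ofReal_mul (by positivity), ENNReal.ofReal_natCast]]
          rw [← ENNReal.ofReal_mul (by positivity), ← ENNReal.ofReal_mul (by positivity)]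
          congr 1
          rw [hN]
          ring
  -- put it together
  have hlow := (h coef hsumc).1
  rw [htsumN] at hlow
  have hr1 : ENNReal.ofReal (A * N) ≤ ∑' lam : ↑Λ, ENNReal.ofReal (‖gaussShiftSum (a:ℂ) coef (lam:ℝ)‖^2) := by
    by_cases hs : Summable (fun lam : ↑Λ => ‖gaussShiftSum (a:ℂ) coef (lam:ℝ)‖^2)
    · rw [← ENNReal.ofReal_tsum_of_nonneg (fun lam => by positivity) hs]
      exact ENNReal.ofReal_le_ofReal hlow
    · rw [tsum_eq_zero_of_not_summable hs] at hlow
      exact absurd hlow (not_le.2 (mul_pos hA hN0))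
  have hup : ENNReal.ofReal (A * N) ≤ ENNReal.ofReal ((ε^2*D₁ + Real.exp (-(a/2)*(L-1)^2) * D₂) * N) := by
    calc ENNReal.ofReal (A * N)
        ≤ ∑' lam : ↑Λ, ENNReal.ofReal (‖gaussShiftSum (a:ℂ) coef (lam:ℝ)‖^2) := hr1
      _ ≤ ∑' lam : ↑Λ, (ENNReal.ofReal ((ε^2*C₂^2*S8) * ∑ n ∈ T, ‖coef n‖^2 * Real.exp (-(a/8) * ((lam:ℝ) - (n:ℝ))^2))
            + ENNReal.ofReal ((Real.exp (-(a/2)*(L-1)^2) * Sa) * ∑ n ∈ T, ‖coef n‖^2 * Real.exp (-(a/2) * ((lam:ℝ) - (n:ℝ))^2))) :=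
          ENNReal.tsum_le_tsum hpoint
      _ = (∑' lam : ↑Λ, ENNReal.ofReal ((ε^2*C₂^2*S8) * ∑ n ∈ T, ‖coef n‖^2 * Real.exp (-(a/8) * ((lam:ℝ) - (n:ℝ))^2)))
            + ∑' lam : ↑Λ, ENNReal.ofReal ((Real.exp (-(a/2)*(L-1)^2) * Sa) * ∑ n ∈ T, ‖coef n‖^2 * Real.exp (-(a/2) * ((lam:ℝ) - (n:ℝ))^2)) :=
          ENNReal.tsum_add
      _ ≤ ENNReal.ofReal ((ε^2*C₂^2*S8) * ((K:ℝ) * Sgauss (a/8)) * N)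
            + ENNReal.ofReal ((Real.exp (-(a/2)*(L-1)^2) * Sa) * ((K:ℝ) * Sgauss (a/2)) * N) :=
          add_le_add (hsumbound _ _ (by positivity) (by positivity))
            (hsumbound _ _ (by positivity) (by positivity))
      _ = ENNReal.ofReal ((ε^2*D₁ + Real.exp (-(a/2)*(L-1)^2) * D₂) * N) := by
          rw [← ENNReal.ofReal_add (by positivity) (by positivity)]
          congr 1
          rw [hD₁, hD₂, hS8, hSa, hS2]
          ring
  have hRHSnn : (0:ℝ) ≤ (ε^2*D₁ + Real.exp (-(a/2)*(L-1)^2) * D₂) * N := by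
    apply mul_nonneg _ (le_of_lt hN0)
    apply add_nonneg
    · exact mul_nonneg (sq_nonneg _) hD₁n
    · exact mul_nonneg (Real.exp_nonneg _) hD₂n
  have hfinal : A * N ≤ (ε^2*D₁ + Real.exp (-(a/2)*(L-1)^2) * D₂) * N :=
    (ENNReal.ofReal_le_ofReal_iff hRHSnn).1 hup
  have hAle : A ≤ ε^2*D₁ + Real.exp (-(a/2)*(L-1)^2) * D₂ :=
    le_of_mul_le_mul_right hfinal hN0
  linarith

/-- density part, assuming the window-counting estimates -/
lemma density_ge_one {M Λ : Set ℝ} {K : ℕ} {L : ℝ} (hMΛ : M ⊆ Λ)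
    (hK : ∀ m : ℤ, (Λ ∩ Set.Ico (m:ℝ) ((m:ℝ)+1)).Finite ∧ (Λ ∩ Set.Ico (m:ℝ) ((m:ℝ)+1)).ncard ≤ K)
    (hL2 : 2 ≤ L)
    (hcount : ∀ α β : ℝ, α ≤ β →
      (Finset.Icc ⌈α⌉ ⌊β⌋).card ≤ (M ∩ Set.Icc (α - L) (β + L)).ncard) :
    1 ≤ lowerBeurlingDensity M := by
  classical
  have key : ∀ r : ℝ, 2*L ≤ r → ∀ x : ℝ, r - (2*L+1) ≤ ((M ∩ Set.Icc x (x + r)).ncard : ℝ) := by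
    intro r hr x
    have hαβ : x + L ≤ x + r - L := by linarith
    have h1 := hcount (x + L) (x + r - L) hαβ
    have e1 : x + L - L = x := by ring
    have e2 : x + r - L + L = x + r := by ring
    rw [e1, e2] at h1
    have h2 : (⌊x+r-L⌋ + 1 - ⌈x+L⌉ : ℤ) ≤ ((⌊x+r-L⌋ + 1 - ⌈x+L⌉).toNat : ℤ) := Int.self_le_toNat _
    have h3 : x + r - L - 1 < ((⌊x+r-L⌋ : ℝ)) := Int.sub_one_lt_floor (x+r-L)
    have h4 : ((⌈x+L⌉ : ℝ)) < x + L + 1 := Int.ceil_lt_add_one _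
    have hcard : r - (2*L+1) ≤ ((Finset.Icc ⌈x+L⌉ ⌊x+r-L⌋).card : ℝ) := by
      rw [Int.card_Icc]
      calc r - (2*L+1) ≤ ((⌊x+r-L⌋ + 1 - ⌈x+L⌉ : ℤ) : ℝ) := by push_cast; linarith
        _ ≤ (((⌊x+r-L⌋ + 1 - ⌈x+L⌉).toNat : ℤ) : ℝ) := by exact_mod_cast h2
        _ = (((⌊x+r-L⌋ + 1 - ⌈x+L⌉).toNat : ℕ) : ℝ) := by push_cast; ring
    calc r - (2*L+1) ≤ ((Finset.Icc ⌈x+L⌉ ⌊x+r-L⌋).card : ℝ) := hcard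
      _ ≤ ((M ∩ Set.Icc x (x + r)).ncard : ℝ) := by exact_mod_cast h1
  -- upper bound on counts for coboundedness
  have hupperct : ∀ x v : ℝ, ((M ∩ Set.Icc x v).ncard) ≤ (Finset.Icc ⌊x⌋ ⌊v⌋).card * K := by
    intro x v
    set s : Finset ℤ := Finset.Icc ⌊x⌋ ⌊v⌋ with hs
    set U : Finset ℝ := s.biUnion (fun m => (hK m).1.toFinset) with hU
    have hsub : M ∩ Set.Icc x v ⊆ ↑U := by
      rintro z ⟨hzM, hz1, hz2⟩
      rw [hU]
      simp only [Finset.coe_biUnion, Set.mem_iUnion]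
      refine ⟨⌊z⌋, ?_, ?_⟩
      · simp only [Finset.mem_coe, hs, Finset.mem_Icc]
        exact ⟨Int.floor_le_floor hz1, Int.floor_le_floor hz2⟩
      · simp only [Finset.mem_coe, Set.Finite.mem_toFinset]
        exact ⟨hMΛ hzM, Int.floor_le z, Int.lt_floor_add_one z⟩
    calc (M ∩ Set.Icc x v).ncard ≤ (↑U : Set ℝ).ncard :=
          Set.ncard_le_ncard hsub (U.finite_toSet)
      _ = U.card := Set.ncard_coe_finset U
      _ ≤ ∑ m ∈ s, ((hK m).1.toFinset).card := Finset.card_biUnion_le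
      _ ≤ ∑ m ∈ s, K := Finset.sum_le_sum (fun m _ => by
            rw [← Set.ncard_eq_toFinset_card _ (hK m).1]
            exact (hK m).2)
      _ = s.card * K := by rw [Finset.sum_const, smul_eq_mul]
  have hL0 : (0:ℝ) < L := by linarith
  set u : ℝ → ℝ := fun r => (⨅ x : ℝ, ((M ∩ Set.Icc x (x + r)).ncard : ℝ)) / r with hu
  set φ : ℝ → ℝ := fun r => (r - (2*L+1))/r with hφdef
  have hφ : Tendsto φ atTop (nhds 1) := by
    have h2 : Tendsto (fun r : ℝ => (2*L+1)/r) atTop (nhds 0) :=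
      tendsto_const_nhds.div_atTop tendsto_id
    have h1 : Tendsto (fun r : ℝ => 1 - (2*L+1)/r) atTop (nhds 1) := by
      have := (tendsto_const_nhds (x := (1:ℝ)) (f := atTop)).sub h2
      simpa using this
    apply h1.congr'
    filter_upwards [eventually_ne_atTop (0:ℝ)] with r hr
    rw [hφdef]
    field_simp
  have hev : ∀ᶠ r : ℝ in atTop, φ r ≤ u r := by
    filter_upwards [eventually_ge_atTop (max (2*L) 1)] with r hr
    have hr1 : (1:ℝ) ≤ r := le_trans (le_max_right _ _) hr
    have hr2 : 2*L ≤ r := le_trans (le_max_left _ _) hr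
    have hr0 : (0:ℝ) < r := by linarith
    rw [hu, hφdef]
    apply (div_le_div_iff_of_pos_right hr0).2
    exact le_ciInf (fun x => key r hr2 x)
  have hbddφ : IsBoundedUnder (· ≥ ·) atTop φ := hφ.isBoundedUnder_ge
  have hcobu : IsCoboundedUnder (· ≥ ·) atTop u := by
    apply isCoboundedUnder_ge_of_eventually_le atTop (x := ((2*K : ℕ) : ℝ))
    filter_upwards [eventually_ge_atTop (max 1 (2*L))] with r hr
    have hr1 : (1:ℝ) ≤ r := le_trans (le_max_left _ _) hr
    have hr0 : (0:ℝ) < r := by linarith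
    rw [hu]
    have hinf_le : (⨅ x : ℝ, ((M ∩ Set.Icc x (x + r)).ncard : ℝ))
        ≤ ((M ∩ Set.Icc 0 (0 + r)).ncard : ℝ) := by
      apply ciInf_le ⟨0, ?_⟩ 0
      rintro z ⟨x, rfl⟩
      positivity
    have hct := hupperct 0 (0 + r)
    have hcard : ((Finset.Icc ⌊(0:ℝ)⌋ ⌊0 + r⌋).card : ℝ) ≤ r + 1 := by
      rw [Int.card_Icc]
      have h5 : ((⌊(0:ℝ) + r⌋ : ℝ)) ≤ 0 + r := Int.floor_le _
      have h6 : ⌊(0:ℝ)⌋ = 0 := by simp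
      rw [h6]
      rcases le_or_gt (⌊(0:ℝ)+r⌋ + 1 - 0) 0 with hle | hpos
      · rw [Int.toNat_of_nonpos hle]
        norm_num
        linarith
      · have h10 : ((⌊(0:ℝ)+r⌋ + 1 - 0).toNat : ℤ) = ⌊(0:ℝ)+r⌋ + 1 - 0 :=
          Int.toNat_of_nonneg (by omega)
        have h11 : (((⌊(0:ℝ)+r⌋ + 1 - 0).toNat : ℕ) : ℝ) = ((⌊(0:ℝ)+r⌋ + 1 - 0 : ℤ) : ℝ) := by
          exact_mod_cast congrArg (fun z : ℤ => (z:ℝ)) h10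
        rw [h11]
        push_cast
        linarith
    have : (⨅ x : ℝ, ((M ∩ Set.Icc x (x + r)).ncard : ℝ)) ≤ (r+1) * K := by
      refine hinf_le.trans ?_
      calc ((M ∩ Set.Icc 0 (0 + r)).ncard : ℝ) ≤ ((Finset.Icc ⌊(0:ℝ)⌋ ⌊0 + r⌋).card * K : ℕ) := by
            exact_mod_cast hct
        _ = ((Finset.Icc ⌊(0:ℝ)⌋ ⌊0 + r⌋).card : ℝ) * K := by push_cast; ring
        _ ≤ (r+1) * K := by
            apply mul_le_mul_of_nonneg_right hcard (by positivity)
    rw [div_le_iff₀ hr0]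
    calc (⨅ x : ℝ, ((M ∩ Set.Icc x (x + r)).ncard : ℝ)) ≤ (r+1) * K := this
      _ ≤ 2*(K:ℝ) * r := by nlinarith [Nat.cast_nonneg (α := ℝ) K]
      _ = ((2*K : ℕ) : ℝ) * r := by push_cast; ring
  have hlim : liminf φ atTop = 1 := hφ.liminf_eq
  rw [lowerBeurlingDensity, ← hlim]
  exact liminf_le_liminf hev hbddφ hcobu

/-- if `Λ` is sampling for `V²_a` then `Λ` is a finite union of separated
sets and contains a separated subset of lower Beurling density `≥ 1`. -/
theorem statement2 (a : ℝ) (ha : 0 < a) (Λ : Set ℝ)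
    (hs : IsSamplingV2 (a : ℂ) Λ) :
    (∃ (k : ℕ) (Λs : Fin k → Set ℝ), (∀ i, IsSeparatedSet (Λs i)) ∧ Λ = ⋃ i, Λs i) ∧
    ∃ Λ' ⊆ Λ, IsSeparatedSet Λ' ∧ 1 ≤ lowerBeurlingDensity Λ' := by
  obtain ⟨A, hA, B, hB, h⟩ := hs
  obtain ⟨K, hK0, hK⟩ := cell_bounds ha hA hB h
  constructor
  · exact decomp hK0 hK
  · obtain ⟨M, hMΛ, hMsep, L, hL2, hcount⟩ := window_count ha hA hB h hK0 hK
    exact ⟨M, hMΛ, hMsep, density_ge_one hMΛ hK hL2 hcount⟩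
end

section
/- Let c ∈ ℂ with a := Re c > 0, and let (δ_m)_{m≤−1} be a bounded sequence of real numbers. Then Σ_{m≤−1} Σ_{n≥1} |e^{-c(m+δ_m−n)²}|² < ∞, and the linear operator K₊ from ℓ²({1,2,…}) to ℓ²({…,−2,−1}) defined by (K₊c)_m = Σ_{n≥1} c_n e^{-c(m+δ_m−n)²} for m ≤ −1 is a well-defined compact (indeed Hilbert–Schmidt) operator. -/
open Filter MeasureTheory ENNReal Topology

set_option maxHeartbeats 1000000

noncomputable section StatementTwelveAux

local notation "⟪" x ", " y "⟫" => @inner ℂ _ _ x y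

namespace StatementTwelve

variable {α β : Type*}

lemma rpow_two_eq (x : ℝ) : x ^ (2:ℝ) = x ^ 2 := by
  rw [show (2:ℝ) = ((2:ℕ):ℝ) by norm_num, Real.rpow_natCast]

lemma hs_summable_sq (w : β → lp (fun _ : α => ℂ) 2) (hw : Summable fun b => ‖w b‖ ^ 2)
    (u : lp (fun _ : α => ℂ) 2) : Summable (fun b => ‖⟪w b, u⟫‖ ^ 2) := by
  apply Summable.of_nonneg_of_le (fun b => by positivity) (fun b => ?_) (hw.mul_right (‖u‖^2))
  calc ‖⟪w b, u⟫‖ ^ 2 ≤ (‖w b‖ * ‖u‖) ^ 2 := by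
        apply pow_le_pow_left₀ (norm_nonneg _) (norm_inner_le_norm _ _)
    _ = ‖w b‖ ^ 2 * ‖u‖ ^ 2 := by ring

lemma hs_memℓp (w : β → lp (fun _ : α => ℂ) 2) (hw : Summable fun b => ‖w b‖ ^ 2)
    (u : lp (fun _ : α => ℂ) 2) : Memℓp (fun b => ⟪w b, u⟫) 2 := by
  apply memℓp_gen
  have h2 : (2 : ℝ≥0∞).toReal = 2 := by norm_num
  rw [h2]
  simp only [rpow_two_eq]
  exact hs_summable_sq w hw u

/-- The Hilbert–Schmidt operator with rows `w`. -/
def hsOp (w : β → lp (fun _ : α => ℂ) 2) (hw : Summable fun b => ‖w b‖ ^ 2) :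
    lp (fun _ : α => ℂ) 2 →L[ℂ] lp (fun _ : β => ℂ) 2 :=
  LinearMap.mkContinuous
    { toFun := fun u => ⟨fun b => ⟪w b, u⟫, hs_memℓp w hw u⟩
      map_add' := by
        intro u v
        apply lp.ext
        funext b
        simp [inner_add_right]
        rfl
      map_smul' := by
        intro a u
        apply lp.ext
        funext b
        simp [inner_smul_right] }
    (Real.sqrt (∑' b, ‖w b‖ ^ 2))
    (by
      intro u
      have h2 : (0:ℝ) < (2 : ℝ≥0∞).toReal := by norm_num
      set v : lp (fun _ : β => ℂ) 2 := ⟨fun b => ⟪w b, u⟫, hs_memℓp w hw u⟩ with hv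
      have hvsq : ‖v‖ ^ 2 = ∑' b, ‖⟪w b, u⟫‖ ^ 2 := by
        have := lp.norm_rpow_eq_tsum h2 v
        rw [show ((2:ℝ≥0∞).toReal) = (2:ℝ) by norm_num] at this
        simpa [rpow_two_eq] using this
      have hle : ‖v‖ ^ 2 ≤ (∑' b, ‖w b‖ ^ 2) * ‖u‖ ^ 2 := by
        rw [hvsq, ← tsum_mul_right]
        refine Summable.tsum_le_tsum (fun b => ?_) (hs_summable_sq w hw u) (hw.mul_right _)
        calc ‖⟪w b, u⟫‖ ^ 2 ≤ (‖w b‖ * ‖u‖) ^ 2 := by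
              apply pow_le_pow_left₀ (norm_nonneg _) (norm_inner_le_norm _ _)
          _ = ‖w b‖ ^ 2 * ‖u‖ ^ 2 := by ring
      have hnn : (0:ℝ) ≤ ∑' b, ‖w b‖ ^ 2 := tsum_nonneg fun b => by positivity
      calc ‖v‖ = Real.sqrt (‖v‖ ^ 2) := by rw [Real.sqrt_sq (norm_nonneg _)]
        _ ≤ Real.sqrt ((∑' b, ‖w b‖ ^ 2) * ‖u‖ ^ 2) := Real.sqrt_le_sqrt hle
        _ = Real.sqrt (∑' b, ‖w b‖ ^ 2) * ‖u‖ := by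
            rw [Real.sqrt_mul hnn, Real.sqrt_sq (norm_nonneg _)])

lemma hsOp_apply (w : β → lp (fun _ : α => ℂ) 2) (hw : Summable fun b => ‖w b‖ ^ 2)
    (u : lp (fun _ : α => ℂ) 2) (b : β) :
    (hsOp w hw u : ∀ _ : β, ℂ) b = ⟪w b, u⟫ := rfl

lemma hsOp_norm_le (w : β → lp (fun _ : α => ℂ) 2) (hw : Summable fun b => ‖w b‖ ^ 2) :
    ‖hsOp w hw‖ ≤ Real.sqrt (∑' b, ‖w b‖ ^ 2) :=
  LinearMap.mkContinuous_norm_le _ (Real.sqrt_nonneg _) _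

lemma finrank_compact {X Y : Type*} [NormedAddCommGroup X] [NormedSpace ℂ X]
    [NormedAddCommGroup Y] [NormedSpace ℂ Y] (f : X →L[ℂ] Y) (V : Submodule ℂ Y)
    [FiniteDimensional ℂ V] (h : ∀ x, f x ∈ V) : IsCompactOperator f := by
  let g : X →L[ℂ] V := f.codRestrict V h
  have hg : IsCompactOperator g := by
    refine ⟨Metric.closedBall 0 ‖g‖, isCompact_closedBall _ _, ?_⟩
    filter_upwards [Metric.ball_mem_nhds (0:X) one_pos] with x hx
    rw [Set.mem_preimage, Metric.mem_closedBall, dist_zero_right]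
    calc ‖g x‖ ≤ ‖g‖ * ‖x‖ := g.le_opNorm x
      _ ≤ ‖g‖ * 1 := by
          apply mul_le_mul_of_nonneg_left _ (norm_nonneg g)
          rw [Metric.mem_ball, dist_zero_right] at hx; linarith
      _ = ‖g‖ := mul_one _
  have hco : (f : X → Y) = (Subtype.val : V → Y) ∘ g := rfl
  rw [hco]
  exact hg.continuous_comp continuous_subtype_val

lemma hsOp_compact (w : β → lp (fun _ : α => ℂ) 2) (hw : Summable fun b => ‖w b‖ ^ 2) :
    IsCompactOperator (hsOp w hw) := by
  classical
  -- truncated rows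
  set wF : Finset β → β → lp (fun _ : α => ℂ) 2 :=
    fun F b => if b ∈ F then w b else 0 with hwFdef
  have hwF : ∀ F : Finset β, Summable fun b => ‖wF F b‖ ^ 2 := by
    intro F
    refine Summable.of_nonneg_of_le (fun b => by positivity) (fun b => ?_) hw
    by_cases hb : b ∈ F <;> simp [hwFdef, hb] <;> positivity
  -- each truncation is compact (finite rank)
  have hcompact : ∀ F : Finset β, IsCompactOperator (hsOp (wF F) (hwF F)) := by
    intro F
    set V : Submodule ℂ (lp (fun _ : β => ℂ) 2) :=
      Submodule.span ℂ ((fun b => lp.single 2 b (1:ℂ)) '' ↑F) with hV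
    haveI : FiniteDimensional ℂ V :=
      FiniteDimensional.span_of_finite ℂ (F.finite_toSet.image _)
    refine finrank_compact _ V (fun u => ?_)
    have key : hsOp (wF F) (hwF F) u
        = ∑ b ∈ F, ⟪w b, u⟫ • lp.single 2 b (1:ℂ) := by
      apply lp.ext
      funext b'
      rw [hsOp_apply]
      have : ((∑ b ∈ F, ⟪w b, u⟫ • lp.single 2 b (1:ℂ) : lp (fun _ : β => ℂ) 2) :
          ∀ _ : β, ℂ) b' = ∑ b ∈ F, ⟪w b, u⟫ * (lp.single 2 b (1:ℂ) : ∀ _ : β, ℂ) b' := by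
        rw [lp.coeFn_sum, Finset.sum_apply]
        congr 1
      rw [this]
      have : ∀ b ∈ F, ⟪w b, u⟫ * (lp.single 2 b (1:ℂ) : ∀ _ : β, ℂ) b'
          = if b' = b then ⟪w b, u⟫ else 0 := by
        intro b _
        rw [lp.single_apply]
        by_cases h : b' = b <;> simp [h]
      rw [Finset.sum_congr rfl this, Finset.sum_ite_eq F b' (fun b => ⟪w b, u⟫)]
      by_cases hb : b' ∈ F <;> simp [hwFdef, hb]
    rw [key]
    exact Submodule.sum_smul_mem V _ (fun b hb =>
      Submodule.subset_span ⟨b, hb, rfl⟩)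
  -- convergence in operator norm
  have hdiff : ∀ F : Finset β, ‖hsOp w hw - hsOp (wF F) (hwF F)‖
      ≤ Real.sqrt (∑' b : {x // x ∉ F}, ‖w b‖ ^ 2) := by
    intro F
    set wC : β → lp (fun _ : α => ℂ) 2 := fun b => if b ∈ F then 0 else w b with hwCdef
    have hwC : Summable fun b => ‖wC b‖ ^ 2 := by
      refine Summable.of_nonneg_of_le (fun b => by positivity) (fun b => ?_) hw
      by_cases hb : b ∈ F <;> simp [hwCdef, hb] <;> positivity
    have hsplit : hsOp w hw - hsOp (wF F) (hwF F) = hsOp wC hwC := by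
      apply ContinuousLinearMap.ext
      intro u
      apply lp.ext
      funext b
      rw [ContinuousLinearMap.sub_apply, lp.coeFn_sub, Pi.sub_apply,
        hsOp_apply, hsOp_apply, hsOp_apply]
      by_cases hb : b ∈ F <;> simp [hwFdef, hwCdef, hb]
    rw [hsplit]
    refine (hsOp_norm_le wC hwC).trans (le_of_eq ?_)
    congr 1
    calc ∑' b, ‖wC b‖ ^ 2
        = ∑' b, Set.indicator {x : β | x ∉ F} (fun b => ‖w b‖ ^ 2) b :=
          tsum_congr (fun b => by
            by_cases hb : b ∈ F <;> simp [hwCdef, Set.indicator, hb])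
      _ = ∑' (b : {x : β // x ∉ F}), ‖w (b : β)‖ ^ 2 := (tsum_subtype _ _).symm
  have htail : Tendsto (fun F : Finset β => Real.sqrt (∑' b : {x // x ∉ F}, ‖w b‖ ^ 2))
      atTop (𝓝 0) := by
    have := tendsto_tsum_compl_atTop_zero (fun b : β => ‖w b‖ ^ 2)
    have := (Real.continuous_sqrt.tendsto 0).comp this
    simpa [Function.comp_def] using this
  have hconv : Tendsto (fun F : Finset β => hsOp (wF F) (hwF F)) atTop (𝓝 (hsOp w hw)) := by
    rw [tendsto_iff_norm_sub_tendsto_zero]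
    refine squeeze_zero (fun F => norm_nonneg _) (fun F => ?_) htail
    rw [norm_sub_rev]
    exact hdiff F
  exact isCompactOperator_of_tendsto hconv (Eventually.of_forall hcompact)

lemma keyineq (nn kk d C : ℝ) (hn : 1 ≤ nn) (hk : 1 ≤ kk) (hd : |d| ≤ C) :
    nn + kk ≤ 2 * (nn + kk - d) ^ 2 + 2 * C ^ 2 := by
  have h1 := abs_le.1 hd
  nlinarith [sq_nonneg (nn + kk - 2*d), mul_nonneg (sub_nonneg.2 h1.2)
    (by linarith : (0:ℝ) ≤ C + d), mul_nonneg (by linarith : (0:ℝ) ≤ nn + kk - 1)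
    (by linarith : (0:ℝ) ≤ nn + kk)]

lemma norm_gauss (c : ℂ) (z : ℝ) :
    ‖Complex.exp (-c * ((z:ℂ)) ^ 2)‖ = Real.exp (-(c.re * z ^ 2)) := by
  rw [Complex.norm_exp, ← Complex.ofReal_pow]
  congr 1
  rw [Complex.mul_re, Complex.ofReal_re, Complex.ofReal_im, Complex.neg_re, Complex.neg_im]
  ring

lemma gauss_summable (c : ℂ) (hc : 0 < c.re) (δ : ℤ → ℝ) (C : ℝ)
    (hC : ∀ m : ℤ, m ≤ -1 → |δ m| ≤ C) :
    Summable (fun p : ℕ+ × {m : ℤ // m ≤ -1} =>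
      ‖Complex.exp (-c * ((((p.2 : ℤ) : ℂ) + ((δ (p.2 : ℤ) : ℝ) : ℂ) -
          ((p.1 : ℕ) : ℂ)) ^ 2))‖ ^ 2) := by
  set a := c.re with ha
  set C' := max C 0 with hC'
  set r := Real.exp (-a) with hr
  set B := Real.exp (2 * a * C' ^ 2) with hB
  have hr0 : 0 ≤ r := (Real.exp_pos _).le
  have hr1 : r < 1 := Real.exp_lt_one_iff.2 (by linarith)
  have hgeo : Summable (fun j : ℕ => r ^ j) := summable_geometric_of_lt_one hr0 hr1
  have h1 : Summable (fun n : ℕ+ => r ^ ((n : ℕ))) :=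
    hgeo.comp_injective PNat.coe_injective
  have h2 : Summable (fun m : {m : ℤ // m ≤ -1} => r ^ ((m : ℤ).natAbs)) := by
    refine hgeo.comp_injective ?_
    intro m₁ m₂ h
    apply Subtype.ext
    have h1' : (m₁ : ℤ) ≤ 0 := le_trans m₁.2 (by norm_num)
    have h2' : (m₂ : ℤ) ≤ 0 := le_trans m₂.2 (by norm_num)
    have h' : (m₁ : ℤ).natAbs = (m₂ : ℤ).natAbs := h
    omega
  have hbig : Summable (fun p : ℕ+ × {m : ℤ // m ≤ -1} =>
      (B * r ^ ((p.1 : ℕ))) * r ^ ((p.2 : ℤ).natAbs)) :=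
    Summable.mul_of_nonneg (h1.mul_left B) h2
      (fun n => mul_nonneg (Real.exp_pos _).le (pow_nonneg hr0 _))
      (fun m => pow_nonneg hr0 _)
  refine Summable.of_nonneg_of_le (fun p => by positivity) (fun p => ?_) hbig
  obtain ⟨n, m⟩ := p
  set k : ℕ := (m : ℤ).natAbs with hk
  have hm1 : (m : ℤ) ≤ -1 := m.2
  have hmk : ((m : ℤ) : ℝ) = -(k : ℝ) := by
    have : (m : ℤ) = -(k : ℤ) := by omega
    rw [this]; push_cast; ring
  have hk1 : (1 : ℝ) ≤ (k : ℝ) := by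
    have : 1 ≤ k := by omega
    exact_mod_cast this
  have hn1 : (1 : ℝ) ≤ ((n : ℕ) : ℝ) := by exact_mod_cast n.2
  have hδ : |δ (m : ℤ)| ≤ C' := le_trans (hC _ hm1) (le_max_left _ _)
  set z : ℝ := ((m : ℤ) : ℝ) + δ (m : ℤ) - ((n : ℕ) : ℝ) with hz
  have hcoe : ((((m : ℤ) : ℂ) + ((δ (m : ℤ) : ℝ) : ℂ) - ((n : ℕ) : ℂ))) = ((z : ℝ) : ℂ) := by
    rw [hz]; push_cast; ring
  rw [hcoe, norm_gauss, sq, ← Real.exp_add]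
  have hrhs : B * r ^ ((n : ℕ)) * r ^ k
      = Real.exp (2 * a * C' ^ 2 + ((n : ℕ) : ℝ) * (-a) + (k : ℝ) * (-a)) := by
    rw [hB, hr, ← Real.exp_nat_mul, ← Real.exp_nat_mul, ← Real.exp_add, ← Real.exp_add]
  rw [hrhs]
  apply Real.exp_le_exp.2
  have key := keyineq ((n : ℕ) : ℝ) (k : ℝ) (δ (m : ℤ)) C' hn1 hk1 hδ
  have hz2 : z ^ 2 = (((n : ℕ) : ℝ) + (k : ℝ) - δ (m : ℤ)) ^ 2 := by
    rw [hz, hmk]; ring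
  nlinarith [mul_le_mul_of_nonneg_left key hc.le]

end StatementTwelve

end StatementTwelveAux

open StatementTwelve in
/-- Claim 2: for `Re c > 0` and bounded `(δ_m)_{m≤-1}`, the Gaussian
matrix `(e^{-c(m+δ_m-n)²})_{m≤-1, n≥1}` is square-summable (Hilbert–Schmidt), and the
induced operator `K₊ : ℓ²({1,2,…}) → ℓ²({…,-2,-1})`, `(K₊u)_m = ∑_{n≥1} u_n e^{-c(m+δ_m-n)²}`,
is a well-defined compact operator. -/
theorem statement12 (c : ℂ) (hc : 0 < c.re) (δ : ℤ → ℝ)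
    (hbdd : ∃ C : ℝ, ∀ m : ℤ, m ≤ -1 → |δ m| ≤ C) :
    Summable (fun p : ℕ+ × {m : ℤ // m ≤ -1} =>
      ‖Complex.exp (-c * ((((p.2 : ℤ) : ℂ) + ((δ (p.2 : ℤ) : ℝ) : ℂ) -
          ((p.1 : ℕ) : ℂ)) ^ 2))‖ ^ 2) ∧
    ∃ K : lp (fun _ : ℕ+ => ℂ) 2 →L[ℂ] lp (fun _ : {m : ℤ // m ≤ -1} => ℂ) 2,
      (∀ (u : lp (fun _ : ℕ+ => ℂ) 2) (m : {m : ℤ // m ≤ -1}),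
          (K u : ∀ _ : {m : ℤ // m ≤ -1}, ℂ) m =
            ∑' n : ℕ+, (u : ∀ _ : ℕ+, ℂ) n *
              Complex.exp (-c * ((((m : ℤ) : ℂ) + ((δ (m : ℤ) : ℝ) : ℂ) -
                ((n : ℕ) : ℂ)) ^ 2))) ∧
      IsCompactOperator K := by
  obtain ⟨C, hC⟩ := hbdd
  have hsum := gauss_summable c hc δ C hC
  refine ⟨hsum, ?_⟩
  -- the kernel and its conjugated rows
  set κ : {m : ℤ // m ≤ -1} → ℕ+ → ℂ := fun m n =>
    Complex.exp (-c * ((((m : ℤ) : ℂ) + ((δ (m : ℤ) : ℝ) : ℂ) - ((n : ℕ) : ℂ)) ^ 2)) with hκ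
  have hrow : ∀ m : {m : ℤ // m ≤ -1}, Summable (fun n : ℕ+ => ‖κ m n‖ ^ 2) := by
    intro m
    exact hsum.comp_injective (i := fun n : ℕ+ => (n, m))
      (fun n₁ n₂ h => (Prod.ext_iff.1 h).1)
  have hrowconj : ∀ m : {m : ℤ // m ≤ -1},
      Memℓp (fun n : ℕ+ => (starRingEnd ℂ) (κ m n)) 2 := by
    intro m
    apply memℓp_gen
    rw [show ((2:ℝ≥0∞).toReal) = (2:ℝ) by norm_num]
    simp only [rpow_two_eq, RCLike.norm_conj]
    exact hrow m
  set w : {m : ℤ // m ≤ -1} → lp (fun _ : ℕ+ => ℂ) 2 := fun m =>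
    ⟨fun n => (starRingEnd ℂ) (κ m n), hrowconj m⟩ with hwdef
  have hwnorm : ∀ m, ‖w m‖ ^ 2 = ∑' n : ℕ+, ‖κ m n‖ ^ 2 := by
    intro m
    have h2 : (0:ℝ) < (2 : ℝ≥0∞).toReal := by norm_num
    have := lp.norm_rpow_eq_tsum h2 (w m)
    rw [show ((2:ℝ≥0∞).toReal) = (2:ℝ) by norm_num] at this
    simp only [rpow_two_eq] at this
    rw [this]
    exact tsum_congr (fun n => by rw [RCLike.norm_conj])
  have hw : Summable fun m => ‖w m‖ ^ 2 := by
    have hs : Summable (fun m : {m : ℤ // m ≤ -1} => ∑' n : ℕ+, ‖κ m n‖ ^ 2) :=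
      hsum.prod_symm.prod
    exact hs.congr (fun m => (hwnorm m).symm)
  refine ⟨hsOp w hw, fun u m => ?_, hsOp_compact w hw⟩
  rw [hsOp_apply, lp.inner_eq_tsum]
  refine tsum_congr (fun n => ?_)
  have h1 : ((w m : ∀ _ : ℕ+, ℂ) n) = (starRingEnd ℂ) (κ m n) := rfl
  rw [RCLike.inner_apply, h1, RingHomCompTriple.comp_apply]
  · rw [mul_comm]
    exact mul_comm _ _
end

section
/- Let Λ ⊂ ℝ be a separated sequence with upper Beurling density D⁺(Λ) < 1. Then there exists a separated set Λ′ ⊇ Λ admitting an enumeration Λ′ = {λ′_m}_{m∈ℤ} with λ′_m = m + δ_m, where (δ_m)_{m∈ℤ} is bounded and there exist an integer N ≥ 1 and δ > 0 with sup_{n∈ℤ} (1/N)|Σ_{k=n+1}^{n+N} δ_k| ≤ δ < 1/2. -/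
open Filter MeasureTheory

/-- Avdonin-type condition: there are `N ≥ 1` and `0 < d < bound` such that
`sup_n (1/N)|∑_{k=n+1}^{n+N} δ_k| ≤ d`. -/
def AvdoninZ (δ : ℤ → ℝ) (bound : ℝ) : Prop :=
  ∃ N : ℕ, 1 ≤ N ∧ ∃ d : ℝ, 0 < d ∧ d < bound ∧
    ∀ n : ℤ, |∑ k ∈ Finset.Icc (n + 1) (n + (N : ℤ)), δ k| / (N : ℝ) ≤ d

namespace S19
open Classical

theorem sep_count {Λ : Set ℝ} {ε : ℝ} (hε : 0 < ε)
    (hsep : ∀ x ∈ Λ, ∀ y ∈ Λ, x ≠ y → ε ≤ |x - y|) (x r : ℝ) (hr : 0 ≤ r) :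
    (Λ ∩ Set.Icc x (x+r)).Finite ∧ ((Λ ∩ Set.Icc x (x+r)).ncard : ℝ) ≤ r/ε + 1 := by
  set s := Λ ∩ Set.Icc x (x+r) with hs
  set f : ℝ → ℤ := fun l => ⌊(l - x)/ε⌋ with hf
  have hinj : Set.InjOn f s := by
    intro a ha b hb hab
    by_contra hne
    have h1 : ε ≤ |a - b| := hsep a ha.1 b hb.1 hne
    have h2 : |(a - x)/ε - (b - x)/ε| < 1 := Int.abs_sub_lt_one_of_floor_eq_floor hab
    rw [div_sub_div_same, abs_div, abs_of_pos hε] at h2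
    have h3 : a - x - (b - x) = a - b := by ring
    rw [h3] at h2
    have := (div_lt_one hε).mp h2
    linarith
  have himg : f '' s ⊆ Set.Icc (0:ℤ) ⌊r/ε⌋ := by
    rintro - ⟨a, ha, rfl⟩
    refine ⟨Int.floor_nonneg.mpr (div_nonneg (by linarith [ha.2.1]) hε.le), ?_⟩
    refine Int.floor_le_floor ?_
    gcongr
    linarith [ha.2.2]
  have hfin : s.Finite := Set.Finite.of_finite_image ((Set.finite_Icc _ _).subset himg) hinj
  refine ⟨hfin, ?_⟩
  have h1 : s.ncard = (f '' s).ncard := (Set.ncard_image_of_injOn hinj).symm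
  have h2 : (f '' s).ncard ≤ (Set.Icc (0:ℤ) ⌊r/ε⌋).ncard :=
    Set.ncard_le_ncard himg (Set.finite_Icc _ _)
  have h3 : (Set.Icc (0:ℤ) ⌊r/ε⌋).ncard = (⌊r/ε⌋ + 1).toNat := by
    rw [← Finset.coe_Icc, Set.ncard_coe_finset, Int.card_Icc]
    simp
  have h4 : ((⌊r/ε⌋ + 1).toNat : ℝ) ≤ r/ε + 1 := by
    have h5 : (0:ℤ) ≤ ⌊r/ε⌋ + 1 := by positivity
    have h6 := Int.floor_le (r/ε)
    have h7 : (((⌊r/ε⌋ + 1).toNat : ℤ) : ℝ) = ((⌊r/ε⌋:ℝ) + 1) := by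
      rw [Int.toNat_of_nonneg h5]; push_cast; ring
    rw [← Int.cast_natCast, h7]
    linarith
  calc (s.ncard : ℝ) ≤ ((⌊r/ε⌋ + 1).toNat : ℝ) := by
        rw [h1]; exact_mod_cast h3 ▸ Nat.cast_le.mpr h2
    _ ≤ r/ε + 1 := h4

theorem exists_L {Λ : Set ℝ} {ε : ℝ} (hε : 0 < ε)
    (hsep : ∀ x ∈ Λ, ∀ y ∈ Λ, x ≠ y → ε ≤ |x - y|)
    (hdens : upperBeurlingDensity Λ < 1) :
    ∃ L : ℕ, 8 ≤ L ∧ ∀ x : ℝ, (Λ ∩ Set.Icc x (x + (L:ℝ))).ncard < L := by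
  set u : ℝ → ℝ := fun r => (⨆ x : ℝ, ((Λ ∩ Set.Icc x (x + r)).ncard : ℝ)) / r with hu
  have hbd : ∀ᶠ r in atTop, u r ≤ 1/ε + 1 := by
    filter_upwards [eventually_ge_atTop (1:ℝ)] with r hr
    have hsup : (⨆ x : ℝ, ((Λ ∩ Set.Icc x (x + r)).ncard : ℝ)) ≤ r/ε + 1 :=
      ciSup_le fun x => (sep_count hε hsep x r (by linarith)).2
    have hr0 : (0:ℝ) < r := by linarith
    rw [hu]
    calc (⨆ x : ℝ, ((Λ ∩ Set.Icc x (x + r)).ncard : ℝ)) / r ≤ (r/ε + 1)/r := by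
          gcongr
      _ = 1/ε + 1/r := by field_simp
      _ ≤ 1/ε + 1 := by
          have : 1/r ≤ 1 := by rw [div_le_one hr0]; linarith
          linarith
  have hlt : ∀ᶠ r in atTop, u r < 1 :=
    eventually_lt_of_limsup_lt hdens (isBoundedUnder_of_eventually_le hbd)
  obtain ⟨R, hR⟩ := eventually_atTop.mp hlt
  refine ⟨max 8 ⌈R⌉₊ + 1, by omega, ?_⟩
  set L : ℕ := max 8 ⌈R⌉₊ + 1 with hL
  have hLR : (L:ℝ) ≥ R := by
    have h1 : ⌈R⌉₊ ≤ L := by omega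
    calc (L:ℝ) ≥ (⌈R⌉₊:ℝ) := by exact_mod_cast h1
    _ ≥ R := Nat.le_ceil R
  have hL0 : (0:ℝ) < L := by positivity
  have huL := hR L hLR
  have hsupL : (⨆ x : ℝ, ((Λ ∩ Set.Icc x (x + (L:ℝ))).ncard : ℝ)) < L :=
    (div_lt_one hL0).mp huL
  intro x
  have hmem : ((Λ ∩ Set.Icc x (x + (L:ℝ))).ncard : ℝ) ≤
      ⨆ x : ℝ, ((Λ ∩ Set.Icc x (x + (L:ℝ))).ncard : ℝ) := by
    apply le_ciSup (f := fun y : ℝ => ((Λ ∩ Set.Icc y (y + (L:ℝ))).ncard : ℝ)) ?_ x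
    refine ⟨(L:ℝ)/ε + 1, ?_⟩
    rintro - ⟨y, rfl⟩
    exact (sep_count hε hsep y L (by positivity)).2
  have hfin2 : ((Λ ∩ Set.Icc x (x + (L:ℝ))).ncard : ℝ) < L := lt_of_le_of_lt hmem hsupL
  exact_mod_cast hfin2

theorem sum_Ico_int {Mo : Type*} [AddCommMonoid Mo] (f : ℤ → Mo) (a : ℤ) (n : ℕ) :
    ∑ m ∈ Finset.Ico a (a + n), f m = ∑ i ∈ Finset.range n, f (a + i) := by
  induction n with
  | zero => simp
  | succ k ih =>
    have h1 : a + ((k:ℤ)+1) = (a + k) + 1 := by ring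
    have h2 : Finset.Ico a ((a+k) + 1) = insert (a + (k:ℤ)) (Finset.Ico a (a+k)) := by
      ext x; simp only [Finset.mem_Ico, Finset.mem_insert]; omega
    rw [Nat.cast_succ, h1, h2, Finset.sum_insert (by simp), ih, Finset.sum_range_succ]
    exact add_comm _ _

lemma oddR_spec' (t : ℝ) (c : ℕ) :
    |((2*⌊(t * 2^c - 1)/2⌋ + 1 : ℤ) : ℝ) * ((2:ℝ)^c)⁻¹ - t| ≤ 2 * ((2:ℝ)^c)⁻¹ := by
  set s : ℝ := t * 2^c - 1 with hs
  have hfl : (s/2 : ℝ) - 1 < (⌊s/2⌋ : ℝ) := Int.sub_one_lt_floor _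
  have hfl2 : ((⌊s/2⌋ : ℝ)) ≤ s/2 := Int.floor_le _
  have hc : (0:ℝ) < 2^c := by positivity
  have hci : (0:ℝ) < ((2:ℝ)^c)⁻¹ := by positivity
  rw [abs_le]
  constructor
  · have h1 : (2*(⌊s/2⌋:ℝ) + 1) ≥ s - 1 := by linarith
    have h2 : ((2*⌊s/2⌋ + 1 : ℤ) : ℝ) * ((2:ℝ)^c)⁻¹ ≥ (s-1) * ((2:ℝ)^c)⁻¹ := by
      push_cast
      apply mul_le_mul_of_nonneg_right (by linarith) (by positivity)
    have h3 : (s - 1) * ((2:ℝ)^c)⁻¹ = t - 2 * ((2:ℝ)^c)⁻¹ := by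
      rw [hs]; field_simp; ring
    linarith
  · have h1 : (2*(⌊s/2⌋:ℝ) + 1) ≤ s + 1 := by linarith
    have h2 : ((2*⌊s/2⌋ + 1 : ℤ) : ℝ) * ((2:ℝ)^c)⁻¹ ≤ (s+1) * ((2:ℝ)^c)⁻¹ := by
      push_cast
      apply mul_le_mul_of_nonneg_right (by linarith) (by positivity)
    have h3 : (s + 1) * ((2:ℝ)^c)⁻¹ = t := by
      rw [hs]; field_simp; ring
    linarith

lemma dyadic_sep (a b : ℤ) (c e : ℕ) (he : 1 ≤ e) :
    ((2:ℝ)^(c+e))⁻¹ ≤ |((2*a+1 : ℤ):ℝ) * ((2:ℝ)^c)⁻¹ - ((2*b+1 : ℤ):ℝ) * ((2:ℝ)^(c+e))⁻¹| := by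
  obtain ⟨e', rfl⟩ : ∃ e', e = e' + 1 := ⟨e - 1, by omega⟩
  set k : ℤ := (2*a+1) * 2^(e'+1) - (2*b+1) with hk
  have hkne : k ≠ 0 := by
    have heven : Even ((2*a+1) * 2^(e'+1)) := Even.mul_left ⟨2^e', by ring⟩ _
    obtain ⟨u, hu⟩ := heven
    rw [hk]
    omega
  have h1 : (1:ℝ) ≤ |((k:ℤ):ℝ)| := by
    rw [← Int.cast_abs]
    exact_mod_cast Int.one_le_abs (by omega)
  have heq : ((2*a+1 : ℤ):ℝ) * ((2:ℝ)^c)⁻¹ - ((2*b+1 : ℤ):ℝ) * ((2:ℝ)^(c+(e'+1)))⁻¹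
      = (k:ℝ) * ((2:ℝ)^(c+(e'+1)))⁻¹ := by
    rw [hk]
    push_cast
    have h2 : (2:ℝ)^(c+(e'+1)) = 2^c * 2^(e'+1) := by rw [pow_add]
    field_simp [h2]
    ring
  rw [heq, abs_mul, abs_of_pos (by positivity : (0:ℝ) < ((2:ℝ)^(c+(e'+1)))⁻¹)]
  nlinarith [inv_pos.mpr (by positivity : (0:ℝ) < (2:ℝ)^(c+(e'+1)))]

noncomputable section
variable (Λ : Set ℝ) (L b : ℕ)

def M : ℕ := 3*L^2 + 10

def blk (j : ℤ) : Set ℝ := Λ ∩ Set.Ico ((L:ℝ)*j) ((L:ℝ)*(j+1))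

variable (hfin : ∀ j : ℤ, (blk Λ L j).Finite)

def blkF (j : ℤ) : Finset ℝ := (hfin j).toFinset
def nj (j : ℤ) : ℕ := (blkF Λ L hfin j).card
def pt (j : ℤ) (i : Fin (nj Λ L hfin j)) : ℝ := ((blkF Λ L hfin j).equivFin.symm i : ℝ)
def jdx (m : ℤ) : ℤ := m / (L:ℤ)
def idx (m : ℤ) : ℕ := (m % (L:ℤ)).toNat

def balT (j : ℤ) : ℝ :=
  ((L:ℝ)*j + (nj Λ L hfin j : ℝ)) -
    ∑ i : Fin (nj Λ L hfin j), (pt Λ L hfin j i - ((L:ℝ)*j + (i:ℝ)))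

def tgt (m : ℤ) : ℝ :=
  if idx L m = nj Λ L hfin (jdx L m) then balT Λ L hfin (jdx L m) else (m:ℝ)

def lev (m : ℤ) : ℕ := b + (m % (M L : ℤ)).toNat
def gg (m : ℤ) : ℝ := ((2:ℝ)^(lev L b m))⁻¹
def oddR (t : ℝ) (c : ℕ) : ℝ := ((2*⌊(t * 2^c - 1)/2⌋ + 1 : ℤ) : ℝ) * ((2:ℝ)^c)⁻¹

def fil (m : ℤ) : ℝ :=
  if ∀ μ ∈ Λ, gg L b m/4 ≤ |oddR (tgt Λ L hfin m) (lev L b m) - μ| then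
    oddR (tgt Λ L hfin m) (lev L b m)
  else oddR (tgt Λ L hfin m) (lev L b m) + 2*gg L b m

def lam (m : ℤ) : ℝ :=
  if h : idx L m < nj Λ L hfin (jdx L m) then pt Λ L hfin (jdx L m) ⟨idx L m, h⟩
  else fil Λ L b hfin m

def del (m : ℤ) : ℝ := lam Λ L b hfin m - (m:ℝ)

def W (a : ℤ) (k : ℕ) : ℝ := ∑ i ∈ Finset.range k, del Λ L b hfin (a + i)

end
section lemmas
variable {Λ : Set ℝ} {L b : ℕ} {ε : ℝ}
variable (hfin : ∀ j : ℤ, (blk Λ L j).Finite)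

lemma idx_lt (hL : 8 ≤ L) (m : ℤ) : idx L m < L := by
  have h := Int.emod_lt_of_pos m (by omega : (0:ℤ) < (L:ℤ))
  have h2 := Int.emod_nonneg m (by omega : (L:ℤ) ≠ 0)
  unfold idx; omega

lemma jdx_idx (hL : 8 ≤ L) (m : ℤ) : (L:ℤ) * jdx L m + (idx L m : ℤ) = m := by
  have h2 := Int.emod_nonneg m (by omega : (L:ℤ) ≠ 0)
  have := Int.mul_ediv_add_emod m (L:ℤ)
  unfold jdx idx; omega

lemma cast_m (hL : 8 ≤ L) (m : ℤ) : (m:ℝ) = (L:ℝ) * (jdx L m : ℝ) + (idx L m : ℝ) := by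
  have h := jdx_idx (L := L) hL m
  have h2 := congrArg (Int.cast : ℤ → ℝ) h.symm
  push_cast at h2
  exact h2

lemma jdx_spec (hL : 8 ≤ L) (j : ℤ) (i : ℕ) (hi : i < L) :
    jdx L ((L:ℤ)*j + i) = j ∧ idx L ((L:ℤ)*j + i) = i := by
  have h1 : ((L:ℤ)*j + i) / L = j := by
    rw [add_comm, Int.add_mul_ediv_left _ _ (by omega : (L:ℤ) ≠ 0)]
    rw [Int.ediv_eq_zero_of_lt (by positivity) (by exact_mod_cast hi)]
    ring
  have h2 : ((L:ℤ)*j + i) % L = i := by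
    rw [add_comm, Int.add_mul_emod_self_left]
    exact Int.emod_eq_of_lt (by positivity) (by exact_mod_cast hi)
  refine ⟨h1, ?_⟩
  unfold idx; rw [h2]; simp

lemma pt_mem (j : ℤ) (i : Fin (nj Λ L hfin j)) : pt Λ L hfin j i ∈ blk Λ L j := by
  have h2 : ((blkF Λ L hfin j).equivFin.symm i : ℝ) ∈ blkF Λ L hfin j :=
    ((blkF Λ L hfin j).equivFin.symm i).2
  unfold blkF at h2
  exact (Set.Finite.mem_toFinset _).mp h2

lemma pt_inj (j : ℤ) : Function.Injective (pt Λ L hfin j) := by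
  intro i i' h
  exact (blkF Λ L hfin j).equivFin.symm.injective (Subtype.ext h)

lemma pt_dist (hcount : ∀ j : ℤ, nj Λ L hfin j < L) (j : ℤ) (i : Fin (nj Λ L hfin j)) :
    |pt Λ L hfin j i - ((L:ℝ)*j + (i:ℝ))| ≤ L := by
  have hm := pt_mem hfin j i
  have h1 : (L:ℝ)*j ≤ pt Λ L hfin j i := hm.2.1
  have h2 : pt Λ L hfin j i < (L:ℝ)*(j+1) := hm.2.2
  have h3 : (0:ℝ) ≤ (i:ℝ) := by positivity
  have h4 : (i:ℝ) < L := by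
    have h6 : (i:ℕ) < L := by have := i.2; have h5 := hcount j; omega
    exact_mod_cast h6
  rw [abs_le]; push_cast at h2 ⊢; constructor <;> nlinarith

lemma sum_pt_dist (hcount : ∀ j : ℤ, nj Λ L hfin j < L) (j : ℤ) :
    |∑ i : Fin (nj Λ L hfin j), (pt Λ L hfin j i - ((L:ℝ)*j + (i:ℝ)))| ≤ (L:ℝ)^2 := by
  calc |∑ i : Fin (nj Λ L hfin j), (pt Λ L hfin j i - ((L:ℝ)*j + (i:ℝ)))|
      ≤ ∑ i : Fin (nj Λ L hfin j), |pt Λ L hfin j i - ((L:ℝ)*j + (i:ℝ))| :=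
        Finset.abs_sum_le_sum_abs _ _
    _ ≤ ∑ _i : Fin (nj Λ L hfin j), (L:ℝ) :=
        Finset.sum_le_sum (fun i _ => pt_dist hfin hcount j i)
    _ = (nj Λ L hfin j : ℝ) * L := by rw [Finset.sum_const]; simp [mul_comm]
    _ ≤ (L:ℝ) * L := by
        have : (nj Λ L hfin j : ℝ) ≤ L := by exact_mod_cast (hcount j).le
        nlinarith [show (0:ℝ) ≤ L by positivity]
    _ = (L:ℝ)^2 := by ring

lemma tgt_near (hL : 8 ≤ L) (hcount : ∀ j : ℤ, nj Λ L hfin j < L) (m : ℤ) :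
    |tgt Λ L hfin m - (m:ℝ)| ≤ (L:ℝ)^2 := by
  unfold tgt
  split_ifs with h
  · have hcast : ((L:ℝ)*(jdx L m : ℝ) + (nj Λ L hfin (jdx L m) : ℝ)) = (m:ℝ) := by
      rw [← h]; exact (cast_m hL m).symm
    unfold balT
    rw [hcast]
    have heq : (m:ℝ) - (∑ i : Fin (nj Λ L hfin (jdx L m)),
        (pt Λ L hfin (jdx L m) i - ((L:ℝ)*(jdx L m) + (i:ℝ)))) - (m:ℝ)
        = -(∑ i : Fin (nj Λ L hfin (jdx L m)),
        (pt Λ L hfin (jdx L m) i - ((L:ℝ)*(jdx L m) + (i:ℝ)))) := by ring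
    rw [heq, abs_neg]
    exact sum_pt_dist hfin hcount (jdx L m)
  · rw [sub_self, abs_zero]
    positivity

lemma M_pos : 0 < M L := by unfold M; omega

lemma lev_lt (m : ℤ) : lev L b m < b + M L := by
  have h1 := Int.emod_lt_of_pos m (by exact_mod_cast M_pos (L := L) : (0:ℤ) < ((M L : ℕ):ℤ))
  have h2 := Int.emod_nonneg m (by have := M_pos (L := L); omega : ((M L : ℕ):ℤ) ≠ 0)
  unfold lev; omega

lemma gg_pos (m : ℤ) : 0 < gg L b m := by unfold gg; positivity

lemma gg_le (m : ℤ) : gg L b m ≤ ((2:ℝ)^b)⁻¹ := by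
  unfold gg
  apply inv_anti₀ (by positivity)
  apply pow_le_pow_right₀ (by norm_num)
  unfold lev; omega

lemma gg_ge (m : ℤ) : ((2:ℝ)^(b + M L))⁻¹ ≤ gg L b m := by
  unfold gg
  apply inv_anti₀ (by positivity)
  apply pow_le_pow_right₀ (by norm_num)
  exact (lev_lt (L := L) (b := b) m).le

lemma lev_eq_far {m m' : ℤ} (h : lev L b m = lev L b m') (hne : m ≠ m') :
    ((M L : ℕ):ℤ) ≤ |m - m'| := by
  have hM : (0:ℤ) < ((M L : ℕ):ℤ) := by exact_mod_cast M_pos (L := L)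
  have h1 : m % ((M L : ℕ):ℤ) = m' % ((M L : ℕ):ℤ) := by
    have h2 := Int.emod_nonneg m (by omega : ((M L:ℕ):ℤ) ≠ 0)
    have h3 := Int.emod_nonneg m' (by omega : ((M L:ℕ):ℤ) ≠ 0)
    unfold lev at h; omega
  have hdvd : ((M L:ℕ):ℤ) ∣ (m - m') := Int.ModEq.dvd (Int.ModEq.symm h1)
  exact Int.le_of_dvd (abs_pos.mpr (sub_ne_zero.mpr hne)) ((dvd_abs _ _).mpr hdvd)

lemma fil_odd (m : ℤ) :
    ∃ a : ℤ, fil Λ L b hfin m = ((2*a+1 : ℤ):ℝ) * ((2:ℝ)^(lev L b m))⁻¹ := by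
  unfold fil oddR
  split_ifs with h
  · exact ⟨_, rfl⟩
  · refine ⟨⌊(tgt Λ L hfin m * 2^(lev L b m) - 1)/2⌋ + 1, ?_⟩
    unfold gg
    push_cast
    ring

lemma fil_close (m : ℤ) : |fil Λ L b hfin m - tgt Λ L hfin m| ≤ 4 * gg L b m := by
  have h1 := oddR_spec' (tgt Λ L hfin m) (lev L b m)
  have h2 : oddR (tgt Λ L hfin m) (lev L b m)
      = ((2*⌊(tgt Λ L hfin m * 2^(lev L b m) - 1)/2⌋ + 1 : ℤ) : ℝ) * ((2:ℝ)^(lev L b m))⁻¹ := rfl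
  rw [← h2] at h1
  have hg : gg L b m = ((2:ℝ)^(lev L b m))⁻¹ := rfl
  rw [← hg] at h1
  have hgpos := gg_pos (L := L) (b := b) m
  unfold fil
  split_ifs with h
  · linarith [h1]
  · have h3 : oddR (tgt Λ L hfin m) (lev L b m) + 2*gg L b m - tgt Λ L hfin m
        = (oddR (tgt Λ L hfin m) (lev L b m) - tgt Λ L hfin m) + 2*gg L b m := by ring
    rw [h3]
    have h4 := abs_add_le (oddR (tgt Λ L hfin m) (lev L b m) - tgt Λ L hfin m) (2*gg L b m)
    have h8 : |2*gg L b m| = 2*gg L b m := abs_of_pos (by linarith)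
    rw [h8] at h4
    linarith

include hfin in
lemma fil_far (hε : 0 < ε) (hsep : ∀ x ∈ Λ, ∀ y ∈ Λ, x ≠ y → ε ≤ |x - y|)
    (hbε : 8*((2:ℝ)^b)⁻¹ ≤ ε) (m : ℤ) :
    ∀ μ ∈ Λ, gg L b m/4 ≤ |fil Λ L b hfin m - μ| := by
  have hgpos := gg_pos (L := L) (b := b) m
  have hgε : 8 * gg L b m ≤ ε := le_trans (by have := gg_le (L := L) (b := b) m; linarith) hbε
  unfold fil
  split_ifs with h
  · exact h
  · push_neg at h
    obtain ⟨μ0, hμ0, hlt⟩ := h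
    intro μ hμ
    by_contra hcon
    push_neg at hcon
    set r := oddR (tgt Λ L hfin m) (lev L b m) with hr
    set g := gg L b m with hgdef
    have hrμ : |r + 2*g - μ| < g/4 := hcon
    have hne : μ ≠ μ0 := by
      intro hMU
      subst hMU
      have e1 : r + 2*g - μ = (2*g) - (μ - r) := by ring
      have e2 : |μ - r| < g/4 := by rw [abs_sub_comm]; exact hlt
      have e3 : |r + 2*g - μ| ≥ 2*g - |μ - r| := by
        rw [e1]
        have := abs_sub_abs_le_abs_sub (2*g) (μ - r)
        have h9 : |2*g| = 2*g := abs_of_pos (by linarith)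
        calc 2*g - |μ - r| = |2*g| - |μ - r| := by rw [h9]
          _ ≤ |2*g - (μ - r)| := abs_sub_abs_le_abs_sub _ _
      linarith
    have hd := hsep μ hμ μ0 hμ0 hne
    have htri : |μ - μ0| ≤ |r + 2*g - μ| + 2*g + |r - μ0| := by
      have key : μ - μ0 = -(r + 2*g - μ) + (2*g) + (r - μ0) := by ring
      rw [key]
      have t1 := abs_add_le (-(r + 2*g - μ) + (2*g)) (r - μ0)
      have t2 := abs_add_le (-(r + 2*g - μ)) (2*g)
      rw [abs_neg] at t2
      have h8 : |(2*g)| = 2*g := abs_of_pos (by linarith)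
      rw [h8] at t2
      linarith
    linarith

end lemmas
section lemmas2
variable {Λ : Set ℝ} {L b : ℕ} {ε : ℝ}
variable (hfin : ∀ j : ℤ, (blk Λ L j).Finite)

lemma pt_congr {j j' : ℤ} (h : j = j') (i : Fin (nj Λ L hfin j)) (i' : Fin (nj Λ L hfin j'))
    (hii : (i:ℕ) = (i':ℕ)) : pt Λ L hfin j i = pt Λ L hfin j' i' := by
  subst h
  rw [Fin.ext hii]

lemma lam_at (hL : 8 ≤ L) (j : ℤ) (i : ℕ) (hiL : i < L) (h : i < nj Λ L hfin j) :
    lam Λ L b hfin ((L:ℤ)*j + i) = pt Λ L hfin j ⟨i, h⟩ := by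
  obtain ⟨hj, hi⟩ := jdx_spec (L := L) hL j i hiL
  have h' : idx L ((L:ℤ)*j + i) < nj Λ L hfin (jdx L ((L:ℤ)*j + i)) := by
    rw [hi, hj]; exact h
  unfold lam
  rw [dif_pos h']
  exact pt_congr hfin hj _ _ hi

lemma lam_fil_at (hL : 8 ≤ L) (j : ℤ) (i : ℕ) (hiL : i < L) (h : ¬ i < nj Λ L hfin j) :
    lam Λ L b hfin ((L:ℤ)*j + i) = fil Λ L b hfin ((L:ℤ)*j + i) := by
  obtain ⟨hj, hi⟩ := jdx_spec (L := L) hL j i hiL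
  have h' : ¬ idx L ((L:ℤ)*j + i) < nj Λ L hfin (jdx L ((L:ℤ)*j + i)) := by
    rw [hi, hj]; exact h
  unfold lam
  rw [dif_neg h']

lemma tgt_at (hL : 8 ≤ L) (j : ℤ) (i : ℕ) (hiL : i < L) (h : i ≠ nj Λ L hfin j) :
    tgt Λ L hfin ((L:ℤ)*j + i) = (((L:ℤ)*j + i : ℤ) : ℝ) := by
  obtain ⟨hj, hi⟩ := jdx_spec (L := L) hL j i hiL
  unfold tgt
  rw [hj, hi, if_neg h]

lemma tgt_bal (hL : 8 ≤ L) (j : ℤ) (hn : nj Λ L hfin j < L) :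
    tgt Λ L hfin ((L:ℤ)*j + (nj Λ L hfin j : ℤ)) = balT Λ L hfin j := by
  have hj := jdx_spec (L := L) hL j (nj Λ L hfin j) hn
  unfold tgt
  rw [hj.1, hj.2, if_pos rfl]

lemma lam_sub (hL : 8 ≤ L) (hcount : ∀ j : ℤ, nj Λ L hfin j < L)
    (hbL : 8*(L:ℝ)*((2:ℝ)^b)⁻¹ ≤ 1) (m : ℤ) :
    |lam Λ L b hfin m - (m:ℝ)| ≤ (L:ℝ)^2 + 1 := by
  have hLpos : (8:ℝ) ≤ (L:ℝ) := by exact_mod_cast hL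
  unfold lam
  split_ifs with h
  · have hd := pt_dist hfin hcount (jdx L m) ⟨idx L m, h⟩
    have hc := cast_m (L := L) hL m
    rw [← hc] at hd
    nlinarith
  · have h1 := fil_close (Λ := Λ) (L := L) (b := b) hfin m
    have h2 := tgt_near hfin hL hcount m
    have h3 := gg_le (L := L) (b := b) m
    have hb0 : (0:ℝ) ≤ ((2:ℝ)^b)⁻¹ := by positivity
    have h4 : 4 * gg L b m ≤ 1 := by nlinarith [gg_pos (L := L) (b := b) m]
    calc |fil Λ L b hfin m - (m:ℝ)|
        ≤ |fil Λ L b hfin m - tgt Λ L hfin m| + |tgt Λ L hfin m - (m:ℝ)| := abs_sub_le _ _ _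
      _ ≤ (L:ℝ)^2 + 1 := by linarith

lemma block_sum (hL : 8 ≤ L) (hcount : ∀ j : ℤ, nj Λ L hfin j < L) (j : ℤ) :
    |W Λ L b hfin ((L:ℤ)*j) L| ≤ 4*(L:ℝ)*((2:ℝ)^b)⁻¹ := by
  have hnL : nj Λ L hfin j < L := hcount j
  have hsplit : W Λ L b hfin ((L:ℤ)*j) L
      = ∑ i ∈ Finset.range (nj Λ L hfin j), del Λ L b hfin ((L:ℤ)*j + i)
      + ∑ i ∈ Finset.Ico (nj Λ L hfin j) L, del Λ L b hfin ((L:ℤ)*j + i) := by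
    unfold W
    rw [Finset.range_eq_Ico, ← Finset.sum_Ico_consecutive _ (Nat.zero_le _) hnL.le,
      ← Finset.range_eq_Ico]
  have h1 : ∑ i ∈ Finset.range (nj Λ L hfin j), del Λ L b hfin ((L:ℤ)*j + i)
      = ∑ i : Fin (nj Λ L hfin j), (pt Λ L hfin j i - ((L:ℝ)*j + (i:ℝ))) := by
    rw [← Fin.sum_univ_eq_sum_range]
    apply Finset.sum_congr rfl
    intro i _
    unfold del
    rw [lam_at hfin hL j i (lt_trans i.2 hnL) i.2]
    have he : (⟨(i:ℕ), i.2⟩ : Fin (nj Λ L hfin j)) = i := Fin.ext rfl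
    rw [he]
    push_cast
    ring
  have h2 : ∑ i ∈ Finset.Ico (nj Λ L hfin j) L, del Λ L b hfin ((L:ℤ)*j + i)
      = (∑ i ∈ Finset.Ico (nj Λ L hfin j) L,
          (fil Λ L b hfin ((L:ℤ)*j + i) - tgt Λ L hfin ((L:ℤ)*j + i)))
        + ∑ i ∈ Finset.Ico (nj Λ L hfin j) L,
          (tgt Λ L hfin ((L:ℤ)*j + i) - (((L:ℤ)*j + i : ℤ):ℝ)) := by
    rw [← Finset.sum_add_distrib]
    apply Finset.sum_congr rfl
    intro i hi
    rw [Finset.mem_Ico] at hi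
    unfold del
    rw [lam_fil_at hfin hL j i hi.2 (by omega)]
    ring
  have h3 : ∑ i ∈ Finset.Ico (nj Λ L hfin j) L,
      (tgt Λ L hfin ((L:ℤ)*j + i) - (((L:ℤ)*j + i : ℤ):ℝ))
      = -(∑ i : Fin (nj Λ L hfin j), (pt Λ L hfin j i - ((L:ℝ)*j + (i:ℝ)))) := by
    rw [Finset.sum_eq_sum_Ico_succ_bot hnL]
    have hz : ∑ i ∈ Finset.Ico (nj Λ L hfin j + 1) L,
        (tgt Λ L hfin ((L:ℤ)*j + i) - (((L:ℤ)*j + i : ℤ):ℝ)) = 0 := by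
      apply Finset.sum_eq_zero
      intro i hi
      rw [Finset.mem_Ico] at hi
      rw [tgt_at hfin hL j i hi.2 (by omega)]
      ring
    rw [hz, tgt_bal hfin hL j hnL]
    unfold balT
    push_cast
    ring
  rw [hsplit, h1, h2, h3]
  have h4 : ∀ S A : ℝ, S + (A + -S) = A := by intro S A; ring
  rw [h4]
  calc |∑ i ∈ Finset.Ico (nj Λ L hfin j) L,
      (fil Λ L b hfin ((L:ℤ)*j + i) - tgt Λ L hfin ((L:ℤ)*j + i))|
      ≤ ∑ i ∈ Finset.Ico (nj Λ L hfin j) L,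
        |fil Λ L b hfin ((L:ℤ)*j + i) - tgt Λ L hfin ((L:ℤ)*j + i)| :=
        Finset.abs_sum_le_sum_abs _ _
    _ ≤ ∑ _i ∈ Finset.Ico (nj Λ L hfin j) L, 4*((2:ℝ)^b)⁻¹ := by
        apply Finset.sum_le_sum
        intro i _
        exact le_trans (fil_close hfin _)
          (by have := gg_le (L := L) (b := b) ((L:ℤ)*j + i); linarith)
    _ = ((L - nj Λ L hfin j : ℕ) : ℝ) * (4*((2:ℝ)^b)⁻¹) := by
        rw [Finset.sum_const, Nat.card_Ico]; simp [mul_comm]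
    _ ≤ (L:ℝ) * (4*((2:ℝ)^b)⁻¹) := by
        have hc : ((L - nj Λ L hfin j : ℕ):ℝ) ≤ (L:ℝ) := by exact_mod_cast Nat.sub_le L _
        have : (0:ℝ) ≤ 4*((2:ℝ)^b)⁻¹ := by positivity
        nlinarith
    _ = 4*(L:ℝ)*((2:ℝ)^b)⁻¹ := by ring

lemma W_add (a : ℤ) (k k' : ℕ) :
    W Λ L b hfin a (k+k') = W Λ L b hfin a k + W Λ L b hfin (a+k) k' := by
  induction k' with
  | zero => simp [W]
  | succ q ih =>
    have h1 : k + (q+1) = (k + q) + 1 := by omega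
    rw [h1]
    unfold W at *
    rw [Finset.sum_range_succ, ih, Finset.sum_range_succ]
    have h2 : a + (k:ℤ) + (q:ℤ) = a + ((k:ℕ) + (q:ℕ) : ℕ) := by push_cast; ring
    rw [← h2, add_assoc]

lemma W_blocks (hL : 8 ≤ L) (hcount : ∀ j : ℤ, nj Λ L hfin j < L) (j : ℤ) (q : ℕ) :
    |W Λ L b hfin ((L:ℤ)*j) (L*q)| ≤ (q:ℝ) * (4*(L:ℝ)*((2:ℝ)^b)⁻¹) := by
  induction q generalizing j with
  | zero => simp [W]
  | succ q' ih =>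
    have h1 : L * (q'+1) = L * q' + L := by ring
    rw [h1, W_add]
    have h2 : (L:ℤ)*j + ((L * q' : ℕ) : ℤ) = (L:ℤ)*(j + q') := by push_cast; ring
    rw [h2]
    have h3 := ih j
    have h4 := block_sum (b := b) hfin hL hcount (j + q')
    have h5 := abs_add_le (W Λ L b hfin ((L:ℤ)*j) (L*q')) (W Λ L b hfin ((L:ℤ)*(j+q')) L)
    push_cast
    push_cast at h3
    linarith

lemma W_crude (hL : 8 ≤ L) (hcount : ∀ j : ℤ, nj Λ L hfin j < L)
    (hbL : 8*(L:ℝ)*((2:ℝ)^b)⁻¹ ≤ 1) (a : ℤ) (k : ℕ) :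
    |W Λ L b hfin a k| ≤ (k:ℝ) * ((L:ℝ)^2+1) := by
  unfold W
  calc |∑ i ∈ Finset.range k, del Λ L b hfin (a + i)|
      ≤ ∑ i ∈ Finset.range k, |del Λ L b hfin (a + i)| := Finset.abs_sum_le_sum_abs _ _
    _ ≤ ∑ _i ∈ Finset.range k, ((L:ℝ)^2+1) := by
        apply Finset.sum_le_sum
        intro i _
        exact lam_sub hfin hL hcount hbL (a + i)
    _ = (k:ℝ) * ((L:ℝ)^2+1) := by
        rw [Finset.sum_const, Finset.card_range, nsmul_eq_mul]

end lemmas2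

section lemmas3
variable {Λ : Set ℝ} {L b : ℕ} {ε : ℝ}
variable (hfin : ∀ j : ℤ, (blk Λ L j).Finite)

lemma abs3 (x y z w : ℝ) (h : w = x + y + z) : |w| ≤ |x| + |y| + |z| := by
  rw [h]
  calc |x + y + z| ≤ |x + y| + |z| := abs_add_le _ _
    _ ≤ |x| + |y| + |z| := by linarith [abs_add_le x y]

lemma fil_dyadic {m m' : ℤ} (hlt : lev L b m < lev L b m') :
    ((2:ℝ)^(b + M L))⁻¹ ≤ |fil Λ L b hfin m - fil Λ L b hfin m'| := by
  obtain ⟨a, ha⟩ := fil_odd (Λ := Λ) (L := L) (b := b) hfin m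
  obtain ⟨a', ha'⟩ := fil_odd (Λ := Λ) (L := L) (b := b) hfin m'
  have he : 1 ≤ lev L b m' - lev L b m := by omega
  have heq : lev L b m + (lev L b m' - lev L b m) = lev L b m' := by omega
  have hd := dyadic_sep a a' (lev L b m) (lev L b m' - lev L b m) he
  rw [heq] at hd
  rw [← ha, ← ha'] at hd
  refine le_trans ?_ hd
  apply inv_anti₀ (by positivity)
  apply pow_le_pow_right₀ (by norm_num)
  have := lev_lt (L := L) (b := b) m'
  omega

lemma fil_fil_sep (hL : 8 ≤ L) (hcount : ∀ j : ℤ, nj Λ L hfin j < L)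
    (hbL : 8*(L:ℝ)*((2:ℝ)^b)⁻¹ ≤ 1) {m m' : ℤ} (hne : m ≠ m') :
    ((2:ℝ)^(b + M L))⁻¹/4 ≤ |fil Λ L b hfin m - fil Λ L b hfin m'| := by
  have hinv0 : (0:ℝ) < ((2:ℝ)^(b + M L))⁻¹ := by positivity
  by_cases hlev : lev L b m = lev L b m'
  · -- same level: indices far apart, so values far apart
    have hfar := lev_eq_far (L := L) (b := b) hlev hne
    have hfarR : ((M L : ℕ):ℝ) ≤ |(m:ℝ) - (m':ℝ)| := by
      have h2 : ((m:ℝ) - m') = ((m - m' : ℤ) : ℝ) := by push_cast; ring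
      rw [h2, ← Int.cast_abs]
      exact_mod_cast hfar
    have hM : ((M L : ℕ):ℝ) = 3*(L:ℝ)^2 + 10 := by unfold M; push_cast; ring
    have t1 : |(m:ℝ) - m'| ≤ |tgt Λ L hfin m - tgt Λ L hfin m'|
        + |tgt Λ L hfin m - m| + |tgt Λ L hfin m' - m'| := by
      have h3 := abs3 (tgt Λ L hfin m - tgt Λ L hfin m') (-(tgt Λ L hfin m - m))
        (tgt Λ L hfin m' - m') ((m:ℝ) - m') (by ring)
      rw [abs_neg] at h3
      exact h3
    have t2 : |tgt Λ L hfin m - tgt Λ L hfin m'| ≤ |fil Λ L b hfin m - fil Λ L b hfin m'|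
        + |fil Λ L b hfin m - tgt Λ L hfin m| + |fil Λ L b hfin m' - tgt Λ L hfin m'| := by
      have h3 := abs3 (fil Λ L b hfin m - fil Λ L b hfin m')
        (-(fil Λ L b hfin m - tgt Λ L hfin m)) (fil Λ L b hfin m' - tgt Λ L hfin m')
        (tgt Λ L hfin m - tgt Λ L hfin m') (by ring)
      rw [abs_neg] at h3
      exact h3
    have c1 := fil_close (Λ := Λ) (L := L) (b := b) hfin m
    have c2 := fil_close (Λ := Λ) (L := L) (b := b) hfin m'
    have g1 := gg_le (L := L) (b := b) m
    have g2 := gg_le (L := L) (b := b) m'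
    have n1 := tgt_near hfin hL hcount m
    have n2 := tgt_near hfin hL hcount m'
    have hL8 : (8:ℝ) ≤ (L:ℝ) := by exact_mod_cast hL
    have hb1 : 8*((2:ℝ)^b)⁻¹ ≤ 1 := by nlinarith [inv_nonneg.mpr (le_of_lt (by positivity : (0:ℝ) < (2:ℝ)^b))]
    have hinv1 : ((2:ℝ)^(b + M L))⁻¹ ≤ 1 := by
      rw [inv_le_one_iff₀]
      right
      exact one_le_pow₀ (by norm_num)
    nlinarith
  · rcases lt_or_gt_of_ne hlev with hlt | hgt
    · have := fil_dyadic (Λ := Λ) hfin hlt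
      linarith
    · have := fil_dyadic (Λ := Λ) hfin hgt
      rw [abs_sub_comm] at this
      linarith

lemma lam_sep (hL : 8 ≤ L) (hcount : ∀ j : ℤ, nj Λ L hfin j < L) (hε : 0 < ε)
    (hsep : ∀ x ∈ Λ, ∀ y ∈ Λ, x ≠ y → ε ≤ |x - y|)
    (hbL : 8*(L:ℝ)*((2:ℝ)^b)⁻¹ ≤ 1) (hbε : 8*((2:ℝ)^b)⁻¹ ≤ ε)
    {m m' : ℤ} (hne : m ≠ m') :
    min ε (((2:ℝ)^(b + M L))⁻¹/4) ≤ |lam Λ L b hfin m - lam Λ L b hfin m'| := by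
  have hinv4 : (0:ℝ) < ((2:ℝ)^(b + M L))⁻¹/4 := by positivity
  unfold lam
  split_ifs with h h' h'
  · -- both Λ points
    have hm1 := pt_mem hfin (jdx L m) ⟨idx L m, h⟩
    have hm2 := pt_mem hfin (jdx L m') ⟨idx L m', h'⟩
    have hneq : pt Λ L hfin (jdx L m) ⟨idx L m, h⟩ ≠ pt Λ L hfin (jdx L m') ⟨idx L m', h'⟩ := by
      intro heq
      by_cases hj : jdx L m = jdx L m'
      · have h'' : idx L m' < nj Λ L hfin (jdx L m) := by rw [hj]; exact h'
        have hcong : pt Λ L hfin (jdx L m') ⟨idx L m', h'⟩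
            = pt Λ L hfin (jdx L m) ⟨idx L m', h''⟩ :=
          pt_congr hfin hj.symm _ _ rfl
        rw [hcong] at heq
        have hf := pt_inj hfin (jdx L m) heq
        have hval : idx L m = idx L m' := congrArg Fin.val hf
        have e1 := jdx_idx (L := L) hL m
        have e2 := jdx_idx (L := L) hL m'
        rw [hj] at e1
        omega
      · have b1 := hm1.2
        have b2 := hm2.2
        rw [heq] at b1
        have hL0 : (0:ℝ) < (L:ℝ) := by positivity
        have k1 : ((jdx L m : ℤ):ℝ) < ((jdx L m' : ℤ):ℝ) + 1 := by nlinarith [b1.1, b2.2]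
        have k2 : ((jdx L m' : ℤ):ℝ) < ((jdx L m : ℤ):ℝ) + 1 := by nlinarith [b2.1, b1.2]
        have k1' : jdx L m < jdx L m' + 1 := by exact_mod_cast k1
        have k2' : jdx L m' < jdx L m + 1 := by exact_mod_cast k2
        omega
    refine le_trans (min_le_left _ _) (hsep _ hm1.1 _ hm2.1 hneq)
  · -- point vs filler
    have hm1 := pt_mem hfin (jdx L m) ⟨idx L m, h⟩
    have hfar := fil_far hfin hε hsep hbε m' _ hm1.1
    rw [abs_sub_comm] at hfar
    refine le_trans (min_le_right _ _) (le_trans ?_ hfar)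
    have := gg_ge (L := L) (b := b) m'
    linarith
  · -- filler vs point
    have hm2 := pt_mem hfin (jdx L m') ⟨idx L m', h'⟩
    have hfar := fil_far hfin hε hsep hbε m _ hm2.1
    refine le_trans (min_le_right _ _) (le_trans ?_ hfar)
    have := gg_ge (L := L) (b := b) m
    linarith
  · -- filler vs filler
    exact le_trans (min_le_right _ _) (fil_fil_sep hfin hL hcount hbL hne)

lemma lam_cover (hL : 8 ≤ L) (hcount : ∀ j : ℤ, nj Λ L hfin j < L) :
    Λ ⊆ Set.range (lam Λ L b hfin) := by
  intro μ hμ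
  have hL0 : (0:ℝ) < (L:ℝ) := by positivity
  set j : ℤ := ⌊μ / (L:ℝ)⌋ with hj
  have h1 : (L:ℝ)*j ≤ μ := by
    have := Int.floor_le (μ / (L:ℝ))
    rw [← hj] at this
    calc (L:ℝ)*j ≤ (L:ℝ)*(μ/L) := by nlinarith
      _ = μ := by field_simp
  have h2 : μ < (L:ℝ)*(j+1) := by
    have := Int.lt_floor_add_one (μ / (L:ℝ))
    rw [← hj] at this
    have h3 : μ/L < (j:ℝ)+1 := by push_cast; push_cast at this; linarith
    calc μ = (L:ℝ)*(μ/L) := by field_simp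
      _ < (L:ℝ)*((j:ℝ)+1) := by nlinarith
      _ = (L:ℝ)*(j+1) := by push_cast; ring
  have hblk : μ ∈ blk Λ L j := ⟨hμ, h1, h2⟩
  have hmemF : μ ∈ blkF Λ L hfin j := (Set.Finite.mem_toFinset _).mpr hblk
  set i : Fin (nj Λ L hfin j) := (blkF Λ L hfin j).equivFin ⟨μ, hmemF⟩ with hi
  refine ⟨(L:ℤ)*j + (i:ℕ), ?_⟩
  rw [lam_at hfin hL j (i:ℕ) (lt_trans i.2 (hcount j)) i.2]
  have he : (⟨(i:ℕ), i.2⟩ : Fin (nj Λ L hfin j)) = i := Fin.ext rfl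
  rw [he]
  unfold pt
  rw [hi, Equiv.symm_apply_apply]

lemma window (hL : 8 ≤ L) (hcount : ∀ j : ℤ, nj Λ L hfin j < L)
    (hbL : 8*(L:ℝ)*((2:ℝ)^b)⁻¹ ≤ 1) (n : ℤ) :
    |∑ k ∈ Finset.Icc (n+1) (n + ((L*(4*L*(L^2+1)) : ℕ) : ℤ)), del Λ L b hfin k|
      ≤ ((4*L*(L^2+1) : ℕ) : ℝ) + 1 := by
  set Q : ℕ := 4*L*(L^2+1) with hQ
  set N : ℕ := L*Q with hN
  have hIcc : Finset.Icc (n+1) (n + (N:ℤ)) = Finset.Ico (n+1) ((n+1) + (N:ℤ)) := by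
    ext x
    simp only [Finset.mem_Icc, Finset.mem_Ico]
    omega
  rw [hIcc, sum_Ico_int]
  show |W Λ L b hfin (n+1) N| ≤ (Q:ℝ) + 1
  set a : ℤ := n + 1 with ha
  set j : ℤ := jdx L a with hj
  set r : ℕ := idx L a with hr
  have hrL : r < L := idx_lt (L := L) hL a
  have haeq : (L:ℤ)*j + (r:ℤ) = a := jdx_idx (L := L) hL a
  have hsum : r + (N + (L - r)) = L*(Q+1) := by
    have : r ≤ L := hrL.le
    rw [hN]
    have h5 : r + (L*Q + (L - r)) = L*Q + L := by omega
    rw [h5]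
    ring
  have hWsplit : W Λ L b hfin ((L:ℤ)*j) (L*(Q+1))
      = W Λ L b hfin ((L:ℤ)*j) r + (W Λ L b hfin a N + W Λ L b hfin (a + (N:ℤ)) (L - r)) := by
    rw [← hsum, W_add]
    congr 1
    have h6 : (L:ℤ)*j + (r:ℕ) = a := haeq
    rw [h6, W_add]
  have hb1 := W_blocks (b := b) hfin hL hcount j (Q+1)
  have hb2 := W_crude (b := b) hfin hL hcount hbL ((L:ℤ)*j) r
  have hb3 := W_crude (b := b) hfin hL hcount hbL (a + (N:ℤ)) (L - r)
  have hL8 : (8:ℝ) ≤ (L:ℝ) := by exact_mod_cast hL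
  have hQcast : (Q:ℝ) = 4*(L:ℝ)*((L:ℝ)^2+1) := by rw [hQ]; push_cast; ring
  have hbound1 : ((Q:ℝ)+1) * (4*(L:ℝ)*((2:ℝ)^b)⁻¹) ≤ ((Q:ℝ)+1) * (1/2) := by
    have hQ0 : (0:ℝ) ≤ (Q:ℝ) := by positivity
    have h7 : 4*(L:ℝ)*((2:ℝ)^b)⁻¹ ≤ 1/2 := by linarith
    nlinarith
  have hrle : ((r:ℕ):ℝ) ≤ (L:ℝ) := by exact_mod_cast hrL.le
  have hLrle : ((L - r : ℕ):ℝ) ≤ (L:ℝ) := by exact_mod_cast Nat.sub_le L r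
  have hC0 : (0:ℝ) ≤ (L:ℝ)^2 + 1 := by positivity
  have hb2' : |W Λ L b hfin ((L:ℤ)*j) r| ≤ (L:ℝ) * ((L:ℝ)^2+1) := by
    refine le_trans hb2 ?_
    nlinarith
  have hb3' : |W Λ L b hfin (a + (N:ℤ)) (L - r)| ≤ (L:ℝ) * ((L:ℝ)^2+1) := by
    refine le_trans hb3 ?_
    nlinarith
  have hb1' : |W Λ L b hfin ((L:ℤ)*j) (L*(Q+1))| ≤ ((Q:ℝ)+1) * (1/2) := by
    refine le_trans hb1 ?_
    push_cast
    push_cast at hbound1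
    linarith
  have hWa : W Λ L b hfin a N = W Λ L b hfin ((L:ℤ)*j) (L*(Q+1))
      - W Λ L b hfin ((L:ℤ)*j) r - W Λ L b hfin (a + (N:ℤ)) (L - r) := by
    rw [hWsplit]; ring
  rw [hWa]
  have htri := abs3 (W Λ L b hfin ((L:ℤ)*j) (L*(Q+1))) (-(W Λ L b hfin ((L:ℤ)*j) r))
      (-(W Λ L b hfin (a + (N:ℤ)) (L - r)))
      (W Λ L b hfin ((L:ℤ)*j) (L*(Q+1)) - W Λ L b hfin ((L:ℤ)*j) r
        - W Λ L b hfin (a + (N:ℤ)) (L - r)) (by ring)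
  rw [abs_neg, abs_neg] at htri
  -- (Q+1)/2 + 2 L C = (Q+1)/2 + Q/2 = Q + 1/2 ≤ Q + 1
  have hfinal : ((Q:ℝ)+1) * (1/2) + (L:ℝ)*((L:ℝ)^2+1) + (L:ℝ)*((L:ℝ)^2+1) ≤ (Q:ℝ) + 1 := by
    rw [hQcast]
    ring_nf
    nlinarith
  linarith

end lemmas3
end S19

/-- a separated `Λ ⊂ ℝ` with `D⁺(Λ) < 1` can be enlarged to a separated
set `Λ' = {m + δ_m}_{m∈ℤ}` with `(δ_m)` bounded and satisfying the Avdonin-type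
condition with `δ < 1/2`. -/
theorem statement19 (Λ : Set ℝ)
    (hsep : ∃ ε > 0, ∀ x ∈ Λ, ∀ y ∈ Λ, x ≠ y → ε ≤ |x - y|)
    (hdens : upperBeurlingDensity Λ < 1) :
    ∃ Λ' : Set ℝ, Λ ⊆ Λ' ∧
      (∃ ε > 0, ∀ x ∈ Λ', ∀ y ∈ Λ', x ≠ y → ε ≤ |x - y|) ∧
      ∃ (lam : ℤ → ℝ) (δ : ℤ → ℝ),
        Function.Injective lam ∧ Set.range lam = Λ' ∧
        (∀ m : ℤ, lam m = m + δ m) ∧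
        (∃ C : ℝ, ∀ m : ℤ, |δ m| ≤ C) ∧
        AvdoninZ δ (1 / 2) := by
  classical
  obtain ⟨ε, hε, hsepε⟩ := hsep
  obtain ⟨L, hL, hcountx⟩ := S19.exists_L hε hsepε hdens
  have hfin : ∀ j : ℤ, (S19.blk Λ L j).Finite := by
    intro j
    refine ((S19.sep_count hε hsepε ((L:ℝ)*j) L (by positivity)).1).subset ?_
    rintro x ⟨hx1, hx2, hx3⟩
    refine ⟨hx1, hx2, ?_⟩
    have heq : (L:ℝ)*(j+1) = (L:ℝ)*j + L := by push_cast; ring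
    rw [heq] at hx3
    exact hx3.le
  have hsub : ∀ j : ℤ, S19.blk Λ L j ⊆ Λ ∩ Set.Icc ((L:ℝ)*j) ((L:ℝ)*j + L) := by
    rintro j x ⟨hx1, hx2, hx3⟩
    refine ⟨hx1, hx2, ?_⟩
    have heq : (L:ℝ)*(j+1) = (L:ℝ)*j + L := by push_cast; ring
    rw [heq] at hx3
    exact hx3.le
  have hcount : ∀ j : ℤ, S19.nj Λ L hfin j < L := by
    intro j
    have h1 : S19.nj Λ L hfin j = (S19.blk Λ L j).ncard := by
      unfold S19.nj S19.blkF
      exact (Set.ncard_eq_toFinset_card _ (hfin j)).symm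
    rw [h1]
    have h2 : (S19.blk Λ L j).ncard ≤ (Λ ∩ Set.Icc ((L:ℝ)*j) ((L:ℝ)*j + L)).ncard :=
      Set.ncard_le_ncard (hsub j) (S19.sep_count hε hsepε ((L:ℝ)*j) L (by positivity)).1
    exact lt_of_le_of_lt h2 (hcountx ((L:ℝ)*j))
  obtain ⟨b, hb⟩ := pow_unbounded_of_one_lt (max (8*(L:ℝ)) (8/ε)) (by norm_num : (1:ℝ) < 2)
  have hp : (0:ℝ) < (2:ℝ)^b := by positivity
  have hpinv : (0:ℝ) < ((2:ℝ)^b)⁻¹ := by positivity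
  have hmul : (2:ℝ)^b * ((2:ℝ)^b)⁻¹ = 1 := mul_inv_cancel₀ (ne_of_gt hp)
  have hbL : 8*(L:ℝ)*((2:ℝ)^b)⁻¹ ≤ 1 := by
    have h1 : 8*(L:ℝ) ≤ (2:ℝ)^b := le_of_lt (lt_of_le_of_lt (le_max_left _ _) hb)
    nlinarith
  have hbε : 8*((2:ℝ)^b)⁻¹ ≤ ε := by
    have h1 : 8/ε ≤ (2:ℝ)^b := le_of_lt (lt_of_le_of_lt (le_max_right _ _) hb)
    have h2 : (8:ℝ) ≤ ε * (2:ℝ)^b := by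
      rw [div_le_iff₀ hε] at h1
      linarith [h1]
    nlinarith
  refine ⟨Set.range (S19.lam Λ L b hfin), S19.lam_cover hfin hL hcount, ?_,
    S19.lam Λ L b hfin, S19.del Λ L b hfin, ?_, rfl, ?_, ?_, ?_⟩
  · -- separated
    refine ⟨min ε (((2:ℝ)^(b + S19.M L))⁻¹/4), lt_min hε (by positivity), ?_⟩
    rintro - ⟨m, rfl⟩ - ⟨m', rfl⟩ hxy
    have hne : m ≠ m' := fun h => hxy (by rw [h])
    exact S19.lam_sep hfin hL hcount hε hsepε hbL hbε hne
  · -- injective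
    intro m m' heq
    by_contra hne
    have h1 := S19.lam_sep hfin hL hcount hε hsepε hbL hbε hne
    rw [heq, sub_self, abs_zero] at h1
    have h2 : (0:ℝ) < min ε (((2:ℝ)^(b + S19.M L))⁻¹/4) := lt_min hε (by positivity)
    linarith
  · intro m
    unfold S19.del
    ring
  · exact ⟨(L:ℝ)^2 + 1, fun m => S19.lam_sub hfin hL hcount hbL m⟩
  · -- Avdonin
    refine ⟨L*(4*L*(L^2+1)), ?_, 1/4, by norm_num, by norm_num, ?_⟩
    · have h1 : 0 < L := by omega
      have h2 : 0 < L^2+1 := by positivity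
      have : 0 < L*(4*L*(L^2+1)) := by positivity
      omega
    · intro n
      have hw := S19.window hfin hL hcount hbL n
      have hL8 : (8:ℝ) ≤ (L:ℝ) := by exact_mod_cast hL
      have hQ1 : (1:ℝ) ≤ ((4*L*(L^2+1) : ℕ):ℝ) := by
        have h0 : 0 < 4*L*(L^2+1) := by positivity
        exact_mod_cast h0
      have hN : ((L*(4*L*(L^2+1)) : ℕ):ℝ) = (L:ℝ) * ((4*L*(L^2+1) : ℕ):ℝ) := by push_cast; ring
      have hNpos : (0:ℝ) < ((L*(4*L*(L^2+1)) : ℕ):ℝ) := by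
        rw [hN]; positivity
      rw [div_le_iff₀ hNpos]
      refine le_trans hw ?_
      rw [hN]
      nlinarith
end
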